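/- arXiv:2008.13276 — 7 statements merged into one kernel-verified Lean document; each statement's English description precedes it below -/
import Mathlib

section
/- If a PB election satisfies u_i(c) > 0 for every voter i ∈ N and every candidate c ∈ C, then every outcome produced by an execution of Rule X is exhaustive. -/
open Finset

section PBDefs

variable {V C : Type*} [Fintype V] [DecidableEq V] [Fintype C] [DecidableEq C]

/-- Total cost (as a real number) of a set of candidates. -/
def costOf (cost : C → ℚ) (T : Finset C) : ℝ := ∑ c ∈ T, (cost c : ℝ)

/-- Total (additive) utility of voter `i` for a set of candidates. -/
def util (u : V → C → ℝ) (i : V) (T : Finset C) : ℝ := ∑ c ∈ T, u i c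

/-- A set of candidates is feasible if its total cost is within the budget of 1. -/
def feasible (cost : C → ℚ) (W : Finset C) : Prop := costOf cost W ≤ 1

/-- The validity conditions of a PB election: positive costs, utilities in `[0,1]`,
and every candidate is assigned positive utility by some voter. -/
def validPB (cost : C → ℚ) (u : V → C → ℝ) : Prop :=
  (∀ c, 0 < cost c) ∧ (∀ i c, 0 ≤ u i c ∧ u i c ≤ 1) ∧ (∀ c, ∃ i, 0 < u i c)

/-- Extended justified representation, up to one project: for every (α,T)-cohesive
(nonempty) group `S` of voters, some voter `i ∈ S` gets utility at least `∑ c ∈ T, α c`,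
or some voter `i ∈ S` would exceed this utility after adding one more candidate. -/
def EJRupToOne (cost : C → ℚ) (u : V → C → ℝ) (W : Finset C) : Prop :=
  ∀ (α : C → ℝ) (S : Finset V) (T : Finset C),
    (∀ c, 0 ≤ α c ∧ α c ≤ 1) →
    S.Nonempty →
    costOf cost T * (Fintype.card V : ℝ) ≤ (S.card : ℝ) →
    (∀ i ∈ S, ∀ c ∈ T, α c ≤ u i c) →
    (∃ i ∈ S, (∑ c ∈ T, α c) ≤ util u i W) ∨
      (∃ i ∈ S, ∃ a : C, (∑ c ∈ T, α c) < util u i (insert a W))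

/-- Extended justified representation (exact version): for every (α,T)-cohesive
(nonempty) group `S` of voters, some voter `i ∈ S` gets utility at least `∑ c ∈ T, α c`. -/
def EJRexact (cost : C → ℚ) (u : V → C → ℝ) (W : Finset C) : Prop :=
  ∀ (α : C → ℝ) (S : Finset V) (T : Finset C),
    (∀ c, 0 ≤ α c ∧ α c ≤ 1) →
    S.Nonempty →
    costOf cost T * (Fintype.card V : ℝ) ≤ (S.card : ℝ) →
    (∀ i ∈ S, ∀ c ∈ T, α c ≤ u i c) →
    ∃ i ∈ S, (∑ c ∈ T, α c) ≤ util u i W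

/-- A (nonempty) group `S` of voters is weakly (β,T)-cohesive. -/
def weaklyCohesive (cost : C → ℚ) (u : V → C → ℝ) (β : ℝ) (S : Finset V) (T : Finset C) :
    Prop :=
  S.Nonempty ∧ costOf cost T * (Fintype.card V : ℝ) ≤ (S.card : ℝ) ∧
    ∀ i ∈ S, β ≤ util u i T

/-- Full justified representation. -/
def FJR (cost : C → ℚ) (u : V → C → ℝ) (W : Finset C) : Prop :=
  ∀ (β : ℝ) (S : Finset V) (T : Finset C),
    weaklyCohesive cost u β S T → ∃ i ∈ S, β ≤ util u i W

/-- An outcome is exhaustive if no further candidate fits within the budget. -/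
def exhaustive (cost : C → ℚ) (W : Finset C) : Prop :=
  ∀ c ∉ W, 1 < costOf cost (insert c W)

/-- The core: no nonempty group `S` of voters together with a set `T` of candidates
affordable with `S`'s share of the budget can block the outcome. -/
def inCore (cost : C → ℚ) (u : V → C → ℝ) (W : Finset C) : Prop :=
  ∀ (S : Finset V) (T : Finset C), S.Nonempty →
    costOf cost T * (Fintype.card V : ℝ) ≤ (S.card : ℝ) →
    ∃ i ∈ S, util u i T ≤ util u i W

/-- The multiplicative `a`-approximate core. -/
def inAlphaCore (cost : C → ℚ) (u : V → C → ℝ) (a : ℝ) (W : Finset C) : Prop :=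
  ∀ (S : Finset V) (T : Finset C), T.Nonempty →
    costOf cost T ≤ (S.card : ℝ) / (Fintype.card V : ℝ) →
    ∃ i ∈ S, ∃ c ∈ T, util u i T / a ≤ util u i (insert c W)

/-- The total amount paid so far by voter `i`, given per-candidate payments. -/
def totalPaid (pay : V → C → ℝ) (i : V) : ℝ := ∑ c, pay i c

/-- A candidate `c` is ρ-affordable given the payments made so far. -/
def affordable (cost : C → ℚ) (u : V → C → ℝ) (pay : V → C → ℝ) (ρ : ℝ) (c : C) : Prop :=
  ∑ i, min (1 / (Fintype.card V : ℝ) - totalPaid pay i) (u i c * ρ) = (cost c : ℝ)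

/-- One step of Rule X: add a candidate that is ρ-affordable for the minimum ρ ≥ 0,
and record the corresponding payments. -/
def RuleXStep (cost : C → ℚ) (u : V → C → ℝ) :
    (Finset C × (V → C → ℝ)) → (Finset C × (V → C → ℝ)) → Prop := fun s t =>
  ∃ c ∉ s.1, ∃ ρ : ℝ, 0 ≤ ρ ∧ affordable cost u s.2 ρ c ∧
    (∀ ρ' : ℝ, 0 ≤ ρ' → ∀ c' ∉ s.1, affordable cost u s.2 ρ' c' → ρ ≤ ρ') ∧
    t = (insert c s.1,
      fun i c' => if c' = c then
        min (1 / (Fintype.card V : ℝ) - totalPaid s.2 i) (u i c * ρ) else s.2 i c')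

/-- Rule X terminates when no remaining candidate is ρ-affordable for any ρ ≥ 0. -/
def RuleXTerminal (cost : C → ℚ) (u : V → C → ℝ) (s : Finset C × (V → C → ℝ)) : Prop :=
  ∀ ρ : ℝ, 0 ≤ ρ → ∀ c ∉ s.1, ¬ affordable cost u s.2 ρ c

/-- `W` is the output of some execution of Rule X. -/
def RuleXOutcome (cost : C → ℚ) (u : V → C → ℝ) (W : Finset C) : Prop :=
  ∃ pay : V → C → ℝ,
    Relation.ReflTransGen (RuleXStep cost u) (∅, fun _ _ => 0) (W, pay) ∧
      RuleXTerminal cost u (W, pay)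

/-- One step of the Greedy Cohesive Rule: a state consists of the current outcome,
the active voters and the active candidates.  The rule picks a weakly (β,T)-cohesive
group of active voters with β maximal, breaking ties in favor of smaller `cost T`. -/
def GCRStep (cost : C → ℚ) (u : V → C → ℝ) :
    (Finset C × Finset V × Finset C) → (Finset C × Finset V × Finset C) → Prop := fun s t =>
  ∃ (β : ℝ) (S : Finset V) (T : Finset C),
    0 < β ∧ S ⊆ s.2.1 ∧ T ⊆ s.2.2 ∧ weaklyCohesive cost u β S T ∧
    (∀ (β' : ℝ) (S' : Finset V) (T' : Finset C), 0 < β' → S' ⊆ s.2.1 → T' ⊆ s.2.2 →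
      weaklyCohesive cost u β' S' T' → β' ≤ β) ∧
    (∀ (S' : Finset V) (T' : Finset C), S' ⊆ s.2.1 → T' ⊆ s.2.2 →
      weaklyCohesive cost u β S' T' → costOf cost T ≤ costOf cost T') ∧
    t = (s.1 ∪ T, s.2.1 \ S, s.2.2 \ T)

/-- GCR terminates when no weakly cohesive group of active voters remains. -/
def GCRTerminal (cost : C → ℚ) (u : V → C → ℝ) (s : Finset C × Finset V × Finset C) : Prop :=
  ∀ (β : ℝ) (S : Finset V) (T : Finset C), 0 < β → S ⊆ s.2.1 → T ⊆ s.2.2 →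
    ¬ weaklyCohesive cost u β S T

/-- `W` is the output of some execution of the Greedy Cohesive Rule. -/
def GCROutcome (cost : C → ℚ) (u : V → C → ℝ) (W : Finset C) : Prop :=
  ∃ (AV : Finset V) (AC : Finset C),
    Relation.ReflTransGen (GCRStep cost u) (∅, Finset.univ, Finset.univ) (W, AV, AC) ∧
      GCRTerminal cost u (W, AV, AC)

/-- A price system `(b, p)` (with nonnegative payments) supports the outcome `W`:
conditions (C1)-(C5). -/
def supports (cost : C → ℚ) (u : V → C → ℝ) (b : ℝ) (p : V → C → ℝ) (W : Finset C) : Prop :=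
  1 ≤ b ∧ (∀ i c, 0 ≤ p i c) ∧
  (∀ i c, u i c = 0 → p i c = 0) ∧
  (∀ i, ∑ c, p i c ≤ b / (Fintype.card V : ℝ)) ∧
  (∀ c ∈ W, ∑ i, p i c = (cost c : ℝ)) ∧
  (∀ c ∉ W, ∑ i, p i c = 0) ∧
  (∀ c ∉ W, ∑ i ∈ Finset.univ.filter (fun i => 0 < u i c),
    (b / (Fintype.card V : ℝ) - ∑ c' ∈ W, p i c') ≤ (cost c : ℝ))

/-- An outcome is priceable if some price system supports it. -/
def priceable (cost : C → ℚ) (u : V → C → ℝ) (W : Finset C) : Prop :=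
  ∃ (b : ℝ) (p : V → C → ℝ), supports cost u b p W

/-- EJR for approval-based elections: every `T`-cohesive group contains a voter
with at least `|T|` approved candidates in `W`. -/
def approvalEJR (cost : C → ℚ) (A : V → Finset C) (W : Finset C) : Prop :=
  ∀ (S : Finset V) (T : Finset C), S.Nonempty →
    costOf cost T * (Fintype.card V : ℝ) ≤ (S.card : ℝ) →
    (∀ i ∈ S, T ⊆ A i) →
    ∃ i ∈ S, T.card ≤ (A i ∩ W).card

/-- The `t`-th harmonic number. -/
noncomputable def harm (t : ℕ) : ℝ := ∑ j ∈ Finset.range t, (1 : ℝ) / (j + 1)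

/-- The PAV score of an outcome. -/
noncomputable def PAVscore (A : V → Finset C) (W : Finset C) : ℝ := ∑ i, harm ((A i ∩ W).card)

end PBDefs

/-- Invariant maintained along any execution of Rule X: payments are supported on the
current outcome, nonnegative, each voter has paid at most `1/n`, and total payments
equal the cost of the current outcome. -/
lemma ruleX_invariant {V C : Type*} [Fintype V] [DecidableEq V] [Fintype C] [DecidableEq C]
    (cost : C → ℚ) (u : V → C → ℝ) (hu : ∀ i c, 0 ≤ u i c)
    {s : Finset C × (V → C → ℝ)}
    (h : Relation.ReflTransGen (RuleXStep cost u) (∅, fun _ _ => 0) s) :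
    (∀ i c, c ∉ s.1 → s.2 i c = 0) ∧ (∀ i c, 0 ≤ s.2 i c) ∧
      (∀ i, totalPaid s.2 i ≤ 1 / (Fintype.card V : ℝ)) ∧
      (∑ i, totalPaid s.2 i) = costOf cost s.1 := by
  induction h with
  | refl =>
    refine ⟨fun _ _ _ => rfl, fun _ _ => le_refl 0, fun i => ?_, ?_⟩
    · simp [totalPaid]
    · simp [totalPaid, costOf]
  | @tail b t hab hbt ih =>
    obtain ⟨hzero, hnn, hbound, hsum⟩ := ih
    obtain ⟨c, hcnot, ρ, hρ, haff, hmin, ht⟩ := hbt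
    subst ht
    set q : V → ℝ := fun i =>
      min (1 / (Fintype.card V : ℝ) - totalPaid b.2 i) (u i c * ρ) with hq
    have hqnn : ∀ i, 0 ≤ q i := fun i =>
      le_min (sub_nonneg.mpr (hbound i)) (mul_nonneg (hu i c) hρ)
    have htp : ∀ i,
        totalPaid (fun i c' => if c' = c then q i else b.2 i c') i
          = q i + totalPaid b.2 i := by
      intro i
      have h1 : totalPaid (fun i c' => if c' = c then q i else b.2 i c') i
          = q i + ∑ c' ∈ Finset.univ.erase c, b.2 i c' := by
        unfold totalPaid
        rw [← Finset.add_sum_erase _ _ (Finset.mem_univ c)]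
        simp only [if_pos rfl]
        congr 1
        refine Finset.sum_congr rfl (fun x hx => ?_)
        rw [if_neg (Finset.ne_of_mem_erase hx)]
      have h2 : totalPaid b.2 i = ∑ c' ∈ Finset.univ.erase c, b.2 i c' := by
        unfold totalPaid
        rw [← Finset.add_sum_erase _ _ (Finset.mem_univ c), hzero i c hcnot, zero_add]
      rw [h1, h2]
    refine ⟨?_, ?_, ?_, ?_⟩
    · intro i c' hc'
      simp only [Finset.mem_insert, not_or] at hc'
      simp only [if_neg hc'.1]
      exact hzero i c' (hc'.2)
    · intro i c'
      by_cases h : c' = c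
      · simp only [if_pos h]; exact hqnn i
      · simp only [if_neg h]; exact hnn i c'
    · intro i
      rw [htp i]
      have : q i ≤ 1 / (Fintype.card V : ℝ) - totalPaid b.2 i := min_le_left _ _
      linarith
    · refine (Finset.sum_congr rfl (fun i _ => htp i)).trans ?_
      rw [Finset.sum_add_distrib, hsum]
      have : (∑ i, q i) = (cost c : ℝ) := haff
      rw [this]
      rw [show costOf cost (insert c b.1) = (cost c : ℝ) + ∑ c' ∈ b.1, (cost c' : ℝ)
        from Finset.sum_insert hcnot]
      rfl

/-- If every voter assigns positive utility to every candidate, then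
every Rule X outcome is exhaustive. -/
theorem ruleX_exhaustive_of_positive_utilities
    {V C : Type*} [Fintype V] [DecidableEq V] [Fintype C] [DecidableEq C]
    (cost : C → ℚ) (u : V → C → ℝ) (hvalid : validPB cost u)
    (hpos : ∀ (i : V) (c : C), 0 < u i c)
    (W : Finset C) (hW : RuleXOutcome cost u W) :
    exhaustive cost W := by
  obtain ⟨pay, hsteps, hterm⟩ := hW
  obtain ⟨hcost, hu01, hsome⟩ := hvalid
  intro c hc
  by_contra hgt
  push_neg at hgt
  obtain ⟨hzero, hnn, hbound, hsum⟩ :=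
    ruleX_invariant cost u (fun i c => (hu01 i c).1) hsteps
  -- V is nonempty
  have hVne : Nonempty V := (hsome c).elim (fun i _ => ⟨i⟩)
  have hn : (0 : ℝ) < (Fintype.card V : ℝ) := by
    exact_mod_cast Fintype.card_pos
  set n : ℝ := (Fintype.card V : ℝ) with hndef
  set r : V → ℝ := fun i => 1 / n - totalPaid pay i with hr
  have hrnn : ∀ i, 0 ≤ r i := fun i => sub_nonneg.mpr (hbound i)
  have hsumr : (∑ i, r i) = 1 - costOf cost W := by
    simp only [hr]
    rw [Finset.sum_sub_distrib, Finset.sum_const, Finset.card_univ, nsmul_eq_mul]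
    have hs : (∑ i, totalPaid pay i) = costOf cost W := hsum
    rw [hs]
    congr 1
    field_simp
    rfl
  have hcostc : (cost c : ℝ) ≤ ∑ i, r i := by
    have h1 : costOf cost (insert c W) = (cost c : ℝ) + costOf cost W := by
      rw [costOf, Finset.sum_insert hc, ← costOf]
    rw [hsumr]; rw [h1] at hgt; linarith
  have hcpos : (0 : ℝ) < (cost c : ℝ) := by exact_mod_cast hcost c
  -- the affordability function
  set f : ℝ → ℝ := fun ρ => ∑ i, min (r i) (u i c * ρ) with hf
  have hf0 : f 0 = 0 := by
    simp only [hf, mul_zero]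
    exact Finset.sum_eq_zero (fun i _ => min_eq_right (hrnn i))
  set ρ₀ : ℝ := ∑ i, r i / u i c with hρ₀
  have hρ₀nn : 0 ≤ ρ₀ :=
    Finset.sum_nonneg (fun i _ => div_nonneg (hrnn i) (hpos i c).le)
  have hbig : ∀ i, r i ≤ u i c * ρ₀ := by
    intro i
    have h1 : r i / u i c ≤ ρ₀ :=
      Finset.single_le_sum (f := fun i => r i / u i c)
        (fun j _ => div_nonneg (hrnn j) (hpos j c).le) (Finset.mem_univ i)
    have := (div_le_iff₀ (hpos i c)).mp h1
    linarith
  have hfρ₀ : f ρ₀ = ∑ i, r i := by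
    simp only [hf]
    exact Finset.sum_congr rfl (fun i _ => min_eq_left (hbig i))
  have hcont : ContinuousOn f (Set.Icc 0 ρ₀) := by
    apply Continuous.continuousOn
    apply continuous_finset_sum
    intro i _
    exact Continuous.min continuous_const (continuous_const.mul continuous_id)
  have hmem : (cost c : ℝ) ∈ Set.Icc (f 0) (f ρ₀) := by
    constructor
    · rw [hf0]; exact hcpos.le
    · rw [hfρ₀]; exact hcostc
  obtain ⟨ρ, hρmem, hfρ⟩ := intermediate_value_Icc hρ₀nn hcont hmem
  refine hterm ρ hρmem.1 c hc ?_
  exact hfρ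
end

section
/- Let β > 0 and let S ⊆ N be a weakly (β,T)-cohesive group in a PB election such that there exists no pair (S',T') with S' ⊆ N weakly (β,T')-cohesive and cost(T') < cost(T). Then for every subset A ⊆ T, the set {i ∈ S : u_i(A) > 0} has size at least cost(A)·n. -/
open Finset

/-- If `S` is weakly (β,T)-cohesive with β > 0 and no weakly
(β,T')-cohesive pair has strictly smaller cost than `T`, then for every `A ⊆ T`
at least `cost(A)·n` voters of `S` assign positive utility to `A`. -/
theorem cohesive_support_lemma
    {V C : Type*} [Fintype V] [DecidableEq V] [Fintype C] [DecidableEq C]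
    (cost : C → ℚ) (u : V → C → ℝ) (hvalid : validPB cost u)
    (β : ℝ) (hβ : 0 < β) (S : Finset V) (T : Finset C)
    (hcoh : weaklyCohesive cost u β S T)
    (hmin : ¬ ∃ (S' : Finset V) (T' : Finset C),
      weaklyCohesive cost u β S' T' ∧ costOf cost T' < costOf cost T) :
    ∀ A ⊆ T, costOf cost A * (Fintype.card V : ℝ) ≤
      ((S.filter (fun i => 0 < util u i A)).card : ℝ) := by
  intro A hA
  by_contra hcon
  push_neg at hcon
  obtain ⟨hpos, huv, _⟩ := hvalid
  obtain ⟨hSne, hScard, hSu⟩ := hcoh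
  -- A is nonempty (otherwise costOf A = 0 ≤ card)
  have hAne : A.Nonempty := by
    rcases A.eq_empty_or_nonempty with rfl | h
    · simp [costOf] at hcon
      exact absurd hcon (not_lt.2 (by positivity))
    · exact h
  have hsplit : costOf cost A + costOf cost (T \ A) = costOf cost T := by
    unfold costOf
    rw [← Finset.sum_union (Finset.disjoint_sdiff), Finset.union_sdiff_of_subset hA]
  have hcostApos : 0 < costOf cost A := by
    unfold costOf
    exact Finset.sum_pos (fun c _ => by exact_mod_cast hpos c) hAne
  -- the complementary group
  set S' := S.filter (fun i => ¬ 0 < util u i A) with hS'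
  have hcards : (S'.card : ℝ) = (S.card : ℝ) -
      ((S.filter (fun i => 0 < util u i A)).card : ℝ) := by
    have := Finset.card_filter_add_card_filter_not
      (s := S) (p := fun i => 0 < util u i A)
    have : (S.filter (fun i => 0 < util u i A)).card + S'.card = S.card := this
    push_cast [← this]
    ring
  have hcard' : costOf cost (T \ A) * (Fintype.card V : ℝ) < (S'.card : ℝ) := by
    rw [hcards]
    have : costOf cost (T \ A) = costOf cost T - costOf cost A := by linarith
    rw [this]
    nlinarith
  have hS'ne : S'.Nonempty := by
    rw [← Finset.card_pos]
    have h0 : (0:ℝ) ≤ costOf cost (T \ A) * (Fintype.card V : ℝ) := by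
      have : (0:ℝ) ≤ costOf cost (T \ A) := by
        unfold costOf
        exact Finset.sum_nonneg fun c _ => by exact_mod_cast (hpos c).le
      positivity
    exact_mod_cast lt_of_le_of_lt h0 hcard'
  -- voters in S' get full utility β from T \ A
  have hutil : ∀ i ∈ S', β ≤ util u i (T \ A) := by
    intro i hi
    rw [Finset.mem_filter] at hi
    have hzero : util u i A = 0 := by
      have hnn : 0 ≤ util u i A := by
        unfold util; exact Finset.sum_nonneg fun c _ => (huv i c).1
      cases lt_or_eq_of_le hnn with
      | inl h => exact absurd h hi.2
      | inr h => exact h.symm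
    have : util u i A + util u i (T \ A) = util u i T := by
      unfold util
      rw [← Finset.sum_union (Finset.disjoint_sdiff), Finset.union_sdiff_of_subset hA]
    have := hSu i hi.1
    linarith
  exact hmin ⟨S', T \ A, ⟨hS'ne, hcard'.le, hutil⟩, by linarith⟩
end

section
/- Let S ⊆ N and T ⊆ C in a PB election with rational costs, and suppose that for every subset A ⊆ T the set {i ∈ S : u_i(A) > 0} has size at least cost(A)·n. Then there exist payments p_i : T → ℝ≥0 for the voters i ∈ S such that: (i) p_i(c) = 0 whenever u_i(c) = 0; (ii) Σ_{i∈S} p_i(c) = cost(c) for every c ∈ T; and (iii) Σ_{c∈T} p_i(c) ≤ 1/n for every i ∈ S. -/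
open Finset

/-- If for every subset `A ⊆ T` at least `cost(A)·n` voters of `S`
assign positive utility to `A`, then there exist nonnegative payments of the voters
in `S` for the candidates in `T` such that voters only pay for candidates they value
positively, every candidate in `T` is fully paid, and no voter of `S` pays more
than `1/n` in total. -/
theorem cohesive_payment_lemma
    {V C : Type*} [Fintype V] [DecidableEq V] [Fintype C] [DecidableEq C] [Nonempty V]
    (cost : C → ℚ) (u : V → C → ℝ) (hvalid : validPB cost u)
    (S : Finset V) (T : Finset C)
    (hhall : ∀ A ⊆ T, costOf cost A * (Fintype.card V : ℝ) ≤
      ((S.filter (fun i => 0 < util u i A)).card : ℝ)) :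
    ∃ p : V → C → ℝ,
      (∀ i c, 0 ≤ p i c) ∧
      (∀ i ∈ S, ∀ c ∈ T, u i c = 0 → p i c = 0) ∧
      (∀ c ∈ T, ∑ i ∈ S, p i c = (cost c : ℝ)) ∧
      (∀ i ∈ S, ∑ c ∈ T, p i c ≤ 1 / (Fintype.card V : ℝ)) := by
  
  obtain ⟨hcpos, hu01, _⟩ := hvalid
  have hnpos : 0 < Fintype.card V := Fintype.card_pos
  set n := Fintype.card V with hn
  set D := ∏ c : C, (cost c).den with hDdef
  have hDpos : 0 < D := Finset.prod_pos (fun c _ => (cost c).pos)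
  set k : C → ℕ := fun c =>
    if c ∈ T then (cost c).num.toNat * (D / (cost c).den) * n else 0 with hkdef
  have hk : ∀ c ∈ T, (k c : ℚ) = cost c * n * D := by
    intro c hc
    obtain ⟨m, hm⟩ : (cost c).den ∣ D :=
      Finset.dvd_prod_of_mem (fun c => (cost c).den) (Finset.mem_univ c)
    have hden : 0 < (cost c).den := (cost c).pos
    have hnum : 0 ≤ (cost c).num := Rat.num_nonneg.mpr (hcpos c).le
    have hq : cost c = ((cost c).num : ℚ) / ((cost c).den : ℚ) := (Rat.num_div_den _).symm
    have hden0 : ((cost c).den : ℚ) ≠ 0 := by exact_mod_cast hden.ne'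
    have hnumeq : cost c * ((cost c).den : ℚ) = ((cost c).num : ℚ) := by
      nth_rewrite 1 [hq]
      exact div_mul_cancel₀ _ hden0
    simp only [hkdef, if_pos hc, hm, Nat.mul_div_cancel_left _ hden]
    push_cast
    rw [show (((cost c).num.toNat : ℕ) : ℚ) = ((cost c).num : ℚ) by
      exact_mod_cast Int.toNat_of_nonneg hnum]
    rw [← hnumeq]
    ring
  have hHall : ∀ s : Finset (Σ c : C, Fin (k c)), s.card ≤
      (s.biUnion (fun x => (S.filter fun i => 0 < u i x.1) ×ˢ
        (Finset.univ : Finset (Fin D)))).card := by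
    intro s
    set A := s.image Sigma.fst with hA
    have hAT : A ⊆ T := by
      intro c hc
      rw [hA, Finset.mem_image] at hc
      obtain ⟨x, hx, rfl⟩ := hc
      by_contra hcT
      have hk0 : k x.1 = 0 := by simp [hkdef, hcT]
      have hlt : (x.2 : ℕ) < k x.1 := x.2.isLt
      have hpos : 0 < k x.1 := Nat.lt_of_le_of_lt (Nat.zero_le _) hlt
      omega
    have h1 : s.card ≤ ∑ c ∈ A, k c := by
      calc s.card ≤ (A.sigma fun c => (Finset.univ : Finset (Fin (k c)))).card := by
            apply Finset.card_le_card
            intro x hx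
            rw [Finset.mem_sigma]
            exact ⟨Finset.mem_image_of_mem _ hx, Finset.mem_univ _⟩
        _ = ∑ c ∈ A, k c := by simp [Finset.card_sigma]
    have hsub : (S.filter fun i => 0 < util u i A) ×ˢ (Finset.univ : Finset (Fin D)) ⊆
        s.biUnion (fun x => (S.filter fun i => 0 < u i x.1) ×ˢ
          (Finset.univ : Finset (Fin D))) := by
      rintro ⟨i, j⟩ hij
      rw [Finset.mem_product, Finset.mem_filter] at hij
      obtain ⟨⟨hiS, hiu⟩, -⟩ := hij
      have hex : ∃ c ∈ A, 0 < u i c := by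
        by_contra hno
        push_neg at hno
        have h0 : util u i A = 0 := Finset.sum_eq_zero fun c hc =>
          le_antisymm (hno c hc) (hu01 i c).1
        rw [h0] at hiu
        exact lt_irrefl 0 hiu
      obtain ⟨c, hcA, hcu⟩ := hex
      rw [hA, Finset.mem_image] at hcA
      obtain ⟨x, hx, rfl⟩ := hcA
      rw [Finset.mem_biUnion]
      exact ⟨x, hx, by rw [Finset.mem_product]; exact ⟨Finset.mem_filter.mpr ⟨hiS, hcu⟩,
        Finset.mem_univ _⟩⟩
    have h2' : ∑ c ∈ A, k c ≤ (S.filter fun i => 0 < util u i A).card * D := by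
      have h2 : ((∑ c ∈ A, k c : ℕ) : ℝ) ≤
          (((S.filter fun i => 0 < util u i A).card * D : ℕ) : ℝ) := by
        have hAeq : ((∑ c ∈ A, k c : ℕ) : ℝ) = costOf cost A * n * D := by
          rw [Nat.cast_sum, costOf, Finset.sum_mul, Finset.sum_mul]
          refine Finset.sum_congr rfl fun c hc => ?_
          exact_mod_cast congrArg (fun q : ℚ => (q : ℝ)) (hk c (hAT hc))
        rw [hAeq]
        push_cast
        have hh := hhall A hAT
        calc costOf cost A * n * D = D * (costOf cost A * n) := by ring
          _ ≤ D * ((S.filter fun i => 0 < util u i A).card : ℝ) :=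
              mul_le_mul_of_nonneg_left hh (by positivity)
          _ = _ := by ring
      exact_mod_cast h2
    calc s.card ≤ ∑ c ∈ A, k c := h1
      _ ≤ (S.filter fun i => 0 < util u i A).card * D := h2'
      _ = ((S.filter fun i => 0 < util u i A) ×ˢ (Finset.univ : Finset (Fin D))).card := by
          simp [Finset.card_product]
      _ ≤ _ := Finset.card_le_card hsub
  obtain ⟨f, hfinj, hft⟩ := (Finset.all_card_le_biUnion_card_iff_exists_injective
    (fun x : Σ c : C, Fin (k c) => (S.filter fun i => 0 < u i x.1) ×ˢ
      (Finset.univ : Finset (Fin D)))).mp hHall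
  have hftS : ∀ x : Σ c : C, Fin (k c), (f x).1 ∈ S ∧ 0 < u (f x).1 x.1 := by
    intro x
    have hm := hft x
    rw [Finset.mem_product] at hm
    exact Finset.mem_filter.mp hm.1
  refine ⟨fun i c => ((Finset.univ.filter
      (fun j : Fin (k c) => (f ⟨c, j⟩).1 = i)).card : ℝ) / (n * D), ?_, ?_, ?_, ?_⟩
  · intro i c; positivity
  · intro i _ c _ hu0
    have he : (Finset.univ.filter (fun j : Fin (k c) => (f ⟨c, j⟩).1 = i)) = ∅ := by
      rw [Finset.filter_eq_empty_iff]
      intro j _ hji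
      have hp := (hftS ⟨c, j⟩).2
      rw [hji, hu0] at hp
      exact lt_irrefl 0 hp
    simp [he]
  · intro c hc
    have hfib : (Finset.univ : Finset (Fin (k c))).card =
        ∑ i ∈ S, (Finset.univ.filter (fun j : Fin (k c) => (f ⟨c, j⟩).1 = i)).card :=
      Finset.card_eq_sum_card_fiberwise (fun j _ => (hftS ⟨c, j⟩).1)
    rw [← Finset.sum_div]
    have hkc : (k c : ℝ) = (cost c : ℝ) * n * D := by
      exact_mod_cast congrArg (fun q : ℚ => (q : ℝ)) (hk c hc)
    have hsum : (∑ i ∈ S, ((Finset.univ.filter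
        (fun j : Fin (k c) => (f ⟨c, j⟩).1 = i)).card : ℝ)) = (k c : ℝ) := by
      rw [← Nat.cast_sum, ← hfib]; simp
    rw [hsum, hkc]
    have hn0 : (n : ℝ) ≠ 0 := by positivity
    have hD0 : (D : ℝ) ≠ 0 := by positivity
    field_simp
  · intro i _
    have hX : (Finset.univ.filter fun x : Σ c : C, Fin (k c) => (f x).1 = i) =
        Finset.univ.sigma (fun c => Finset.univ.filter
          (fun j : Fin (k c) => (f ⟨c, j⟩).1 = i)) := by
      ext ⟨c, j⟩
      simp
    have hcard : ∑ c : C, (Finset.univ.filter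
        (fun j : Fin (k c) => (f ⟨c, j⟩).1 = i)).card ≤ D := by
      rw [← Finset.card_sigma, ← hX]
      calc (Finset.univ.filter fun x : Σ c : C, Fin (k c) => (f x).1 = i).card
          ≤ (Finset.univ : Finset (Fin D)).card := by
            apply Finset.card_le_card_of_injOn (fun x => (f x).2)
              (fun _ _ => Finset.mem_univ _)
            intro x hx y hy hxy
            apply hfinj
            have hx' := (Finset.mem_filter.mp hx).2
            have hy' := (Finset.mem_filter.mp hy).2
            exact Prod.ext (hx'.trans hy'.symm) hxy
        _ = D := by simp
    have hTle : ∑ c ∈ T, (Finset.univ.filter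
        (fun j : Fin (k c) => (f ⟨c, j⟩).1 = i)).card ≤ D :=
      le_trans (Finset.sum_le_sum_of_subset (Finset.subset_univ T)) hcard
    rw [← Finset.sum_div]
    have h1 : (∑ c ∈ T, ((Finset.univ.filter
        (fun j : Fin (k c) => (f ⟨c, j⟩).1 = i)).card : ℝ)) ≤ (D : ℝ) := by
      exact_mod_cast hTle
    have hstep : (∑ c ∈ T, ((Finset.univ.filter
        (fun j : Fin (k c) => (f ⟨c, j⟩).1 = i)).card : ℝ)) / ((n : ℝ) * D) ≤
        (D : ℝ) / ((n : ℝ) * D) :=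
      by gcongr <;> positivity
    refine hstep.trans (le_of_eq ?_)
    rw [div_eq_div_iff (by positivity) (by positivity)]
    ring
end

section
/- For every outcome W produced by an execution of the Greedy Cohesive Rule, there exist payment functions p_i : C → ℝ≥0 (i ∈ N) satisfying conditions (C1)–(C4) of a price system for W with initial budget b = 1: p_i(c) = 0 whenever u_i(c) = 0; Σ_{c∈C} p_i(c) ≤ 1/n for each i ∈ N; Σ_{i∈N} p_i(c) = cost(c) for each c ∈ W; and Σ_{i∈N} p_i(c) = 0 for each c ∉ W. -/
open Finset

section Aux

variable {V C : Type*} [Fintype V] [DecidableEq V] [Fintype C] [DecidableEq C]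

/-- Hall-type payment construction for a single step. -/
lemma step_pay (cost : C → ℚ) (u : V → C → ℝ) (hpos : ∀ c, 0 < cost c)
    (S : Finset V) (T : Finset C) (hn : 0 < Fintype.card V)
    (hall : ∀ T' ⊆ T, costOf cost T' * (Fintype.card V : ℝ) ≤
      ((S.filter fun i => ∃ c ∈ T', 0 < u i c).card : ℝ)) :
    ∃ q : V → C → ℝ, (∀ i c, 0 ≤ q i c) ∧ (∀ i c, u i c = 0 → q i c = 0) ∧
      (∀ i c, i ∉ S → q i c = 0) ∧ (∀ i c, c ∉ T → q i c = 0) ∧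
      (∀ i, ∑ c, q i c ≤ 1 / (Fintype.card V : ℝ)) ∧
      (∀ c ∈ T, ∑ i, q i c = (cost c : ℝ)) := by
  classical
  obtain ⟨n, hn', hnpos⟩ : ∃ n : ℕ, n = Fintype.card V ∧ 0 < n := ⟨_, rfl, hn⟩
  obtain ⟨d, hdpos, a, hkey, hazero⟩ :
      ∃ d : ℕ, 0 < d ∧ ∃ a : C → ℕ,
        (∀ c ∈ T, ((a c : ℚ)) = cost c * (n * d)) ∧ (∀ c ∉ T, a c = 0) := by
    refine ⟨∏ c ∈ T, (cost c).den, Finset.prod_pos fun c _ => (cost c).pos, ?_⟩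
    have hint : ∀ c ∈ T, ∃ m : ℕ, (m : ℚ) = cost c * (n * ∏ c ∈ T, (cost c).den) := by
      intro c hc
      obtain ⟨k, hk⟩ := Finset.dvd_prod_of_mem (fun c => (cost c).den) hc
      refine ⟨(cost c).num.toNat * (n * k), ?_⟩
      have h2 : ((cost c).num : ℚ) = cost c * (cost c).den := by
        rw [eq_comm, mul_comm, ← Rat.den_mul_eq_num]
      have hnum : (((cost c).num.toNat : ℕ) : ℚ) = cost c * (cost c).den := by
        rw [← h2]
        exact_mod_cast congrArg (fun z : ℤ => (z : ℚ))
          (Int.toNat_of_nonneg (le_of_lt (Rat.num_pos.mpr (hpos c))))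
      push_cast [hk, hnum]
      ring
    refine ⟨fun c => if hc : c ∈ T then (hint c hc).choose else 0, ?_, ?_⟩
    · intro c hc
      simp only [dif_pos hc]
      exact (hint c hc).choose_spec
    · intro c hc
      simp only [dif_neg hc]
  obtain ⟨M, hM, hMpos⟩ : ∃ M : ℕ, M = n * d ∧ 0 < M :=
    ⟨n * d, rfl, Nat.mul_pos hnpos hdpos⟩
  have hkeyM : ∀ c ∈ T, ((a c : ℚ)) = cost c * M := by
    intro c hc; rw [hkey c hc, hM]; push_cast; ring
  clear hkey
  have hkey := hkeyM
  have hhall : ∀ s : Finset (Σ c : C, Fin (a c)), s.card ≤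
      (s.biUnion fun x => (S.filter fun i => 0 < u i x.1) ×ˢ
        (Finset.univ : Finset (Fin d))).card := by
    intro s
    set T' : Finset C := s.image Sigma.fst with hT'
    have hT'T : T' ⊆ T := by
      intro c hc
      rw [hT', Finset.mem_image] at hc
      obtain ⟨x, hx, rfl⟩ := hc
      by_contra hcT
      have := hazero x.1 hcT
      exact absurd (this ▸ x.2).isLt (by simp)
    set S1 : Finset V := S.filter fun i => ∃ c ∈ T', 0 < u i c with hS1
    have hcard1 : s.card ≤ ∑ c ∈ T', a c := by
      have hsub : s ⊆ T'.sigma fun c => (Finset.univ : Finset (Fin (a c))) := by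
        intro x hx
        rw [Finset.mem_sigma]
        exact ⟨Finset.mem_image_of_mem _ hx, Finset.mem_univ _⟩
      calc s.card ≤ _ := Finset.card_le_card hsub
        _ = ∑ c ∈ T', a c := by
            rw [Finset.card_sigma]; simp
    have hcard2 : S1.card * d ≤
        (s.biUnion fun x => (S.filter fun i => 0 < u i x.1) ×ˢ
          (Finset.univ : Finset (Fin d))).card := by
      have hsub : S1 ×ˢ (Finset.univ : Finset (Fin d)) ⊆
          s.biUnion fun x => (S.filter fun i => 0 < u i x.1) ×ˢ
            (Finset.univ : Finset (Fin d)) := by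
        intro p hp
        rw [Finset.mem_product] at hp
        rw [hS1, Finset.mem_filter] at hp
        obtain ⟨⟨hpS, c, hcT', hcu⟩, -⟩ := hp
        rw [hT', Finset.mem_image] at hcT'
        obtain ⟨x, hx, rfl⟩ := hcT'
        rw [Finset.mem_biUnion]
        exact ⟨x, hx, by
          rw [Finset.mem_product]
          exact ⟨Finset.mem_filter.mpr ⟨hpS, hcu⟩, Finset.mem_univ _⟩⟩
      calc S1.card * d = (S1 ×ˢ (Finset.univ : Finset (Fin d))).card := by
            rw [Finset.card_product]; simp
        _ ≤ _ := Finset.card_le_card hsub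
    refine hcard1.trans (le_trans ?_ hcard2)
    have hq : (∑ c ∈ T', (a c : ℚ)) ≤ (S1.card : ℚ) * d := by
      have hallT' := hall T' hT'T
      have hallQ : (∑ c ∈ T', cost c) * (n : ℚ) ≤ (S1.card : ℚ) := by
        have : ((∑ c ∈ T', cost c : ℚ) : ℝ) * (n : ℝ) ≤ ((S1.card : ℚ) : ℝ) := by
          push_cast [hn']
          simpa [costOf, hS1] using hallT'
        exact_mod_cast this
      calc (∑ c ∈ T', (a c : ℚ)) = ∑ c ∈ T', cost c * M :=
            Finset.sum_congr rfl fun c hc => hkey c (hT'T hc)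
        _ = ((∑ c ∈ T', cost c) * n) * d := by
            rw [← Finset.sum_mul, hM]; push_cast; ring
        _ ≤ (S1.card : ℚ) * d := by
            have hd0 : (0 : ℚ) ≤ d := by positivity
            exact mul_le_mul_of_nonneg_right hallQ hd0
    exact_mod_cast (by exact_mod_cast hq :
      ((∑ c ∈ T', a c : ℕ) : ℚ) ≤ ((S1.card * d : ℕ) : ℚ))
  obtain ⟨f, hfinj, hf⟩ := (Finset.all_card_le_biUnion_card_iff_exists_injective
    (fun x : Σ c : C, Fin (a c) => (S.filter fun i => 0 < u i x.1) ×ˢ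
      (Finset.univ : Finset (Fin d)))).mp hhall
  have hfS : ∀ x : Σ c : C, Fin (a c), (f x).1 ∈ S ∧ 0 < u (f x).1 x.1 := by
    intro x
    have := hf x
    rw [Finset.mem_product, Finset.mem_filter] at this
    exact this.1
  refine ⟨fun i c => if c ∈ T then
      (((Finset.univ.filter fun k : Fin (a c) => (f ⟨c, k⟩).1 = i).card : ℝ) / M) else 0,
      ?_, ?_, ?_, ?_, ?_, ?_⟩
  · intro i c; dsimp only; split
    · positivity
    · exact le_rfl
  · intro i c hu0; dsimp only
    split
    · rw [Finset.filter_eq_empty_iff.mpr, Finset.card_empty]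
      · simp
      · intro k _ hk
        have h := (hfS ⟨c, k⟩).2
        rw [hk] at h
        exact absurd h (by rw [hu0]; exact lt_irrefl 0)
    · rfl
  · intro i c hiS; dsimp only
    split
    · rw [Finset.filter_eq_empty_iff.mpr, Finset.card_empty]
      · simp
      · intro k _ hk
        have h := (hfS ⟨c, k⟩).1
        rw [hk] at h
        exact absurd h hiS
    · rfl
  · intro i c hcT; dsimp only; rw [if_neg hcT]
  · -- per-voter bound
    intro i
    have hcount : (∑ c ∈ T, (Finset.univ.filter fun k : Fin (a c) => (f ⟨c, k⟩).1 = i).card)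
        ≤ d := by
      have hinj : Set.InjOn (fun x : Σ c : C, Fin (a c) => (f x).2)
          ↑(T.sigma fun c => Finset.univ.filter fun k : Fin (a c) => (f ⟨c, k⟩).1 = i) := by
        intro x hx y hy hxy
        simp only [Finset.coe_sigma, Set.mem_sigma_iff, Finset.mem_coe,
          Finset.mem_filter] at hx hy
        have hx2 : (f x).1 = i := by
          have h := hx.2.2; rwa [Sigma.eta] at h
        have hy2 : (f y).1 = i := by
          have h := hy.2.2; rwa [Sigma.eta] at h
        apply hfinj
        exact Prod.ext (hx2.trans hy2.symm) hxy
      have h := Finset.card_le_card_of_injOn (fun x : Σ c : C, Fin (a c) => (f x).2)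
        (fun x _ => Finset.mem_univ _) hinj
      rw [Finset.card_sigma] at h
      simpa using h
    calc ∑ c, (if c ∈ T then
        (((Finset.univ.filter fun k : Fin (a c) => (f ⟨c, k⟩).1 = i).card : ℝ) / M) else 0)
        = ∑ c ∈ T,
          (((Finset.univ.filter fun k : Fin (a c) => (f ⟨c, k⟩).1 = i).card : ℝ) / M) := by
          rw [← Finset.sum_subset (Finset.subset_univ T)]
          · exact Finset.sum_congr rfl fun c hc => if_pos hc
          · intro c _ hc; rw [if_neg hc]
      _ = ((∑ c ∈ T, (Finset.univ.filter fun k : Fin (a c) => (f ⟨c, k⟩).1 = i).card : ℕ) : ℝ)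
          / M := by
          rw [← Finset.sum_div]; push_cast; ring
      _ ≤ (d : ℝ) / M := by
          gcongr
      _ = 1 / (Fintype.card V : ℝ) := by
          rw [hM, ← hn']
          have h1 : (d : ℝ) ≠ 0 := by exact_mod_cast hdpos.ne'
          have h2 : (n : ℝ) ≠ 0 := by exact_mod_cast hnpos.ne'
          push_cast
          field_simp
  · -- payments cover each candidate
    intro c hc
    have hfib : Fintype.card (Fin (a c)) = ∑ i : V,
        (Finset.univ.filter fun k : Fin (a c) => (f ⟨c, k⟩).1 = i).card := by
      rw [← Finset.card_univ]
      exact Finset.card_eq_sum_card_fiberwise fun x _ => Finset.mem_univ _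
    have hac : ((a c : ℝ)) = (cost c : ℝ) * M := by exact_mod_cast hkey c hc
    calc ∑ i, (if c ∈ T then
        (((Finset.univ.filter fun k : Fin (a c) => (f ⟨c, k⟩).1 = i).card : ℝ) / M) else 0)
        = ∑ i : V,
          (((Finset.univ.filter fun k : Fin (a c) => (f ⟨c, k⟩).1 = i).card : ℝ) / M) :=
          Finset.sum_congr rfl fun i _ => if_pos hc
      _ = ((a c : ℝ)) / M := by
          rw [← Finset.sum_div]
          congr 1
          rw [← Nat.cast_sum, ← hfib, Fintype.card_fin]
      _ = (cost c : ℝ) := by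
          rw [hac]
          have hM0 : (M : ℝ) ≠ 0 := by exact_mod_cast hMpos.ne'
          field_simp

lemma hall_from_step (cost : C → ℚ) (u : V → C → ℝ) (hpos : ∀ c, 0 < cost c)
    (hu : ∀ i c, 0 ≤ u i c) (β : ℝ) (S : Finset V) (T : Finset C)
    (hcoh : weaklyCohesive cost u β S T)
    (hmin : ∀ S' ⊆ S, ∀ T' ⊆ T, weaklyCohesive cost u β S' T' →
      costOf cost T ≤ costOf cost T') :
    ∀ T' ⊆ T, costOf cost T' * (Fintype.card V : ℝ) ≤
      ((S.filter fun i => ∃ c ∈ T', 0 < u i c).card : ℝ) := by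
  intro T' hT'
  by_contra hcon
  push_neg at hcon
  set S1 := S.filter fun i => ∃ c ∈ T', 0 < u i c with hS1
  have hS1S : S1 ⊆ S := Finset.filter_subset _ _
  obtain ⟨hSne, hScard, hSut⟩ := hcoh
  have hnpos : (0 : ℝ) < (Fintype.card V : ℝ) := by
    have h0 : 0 < Fintype.card V := Fintype.card_pos_iff.mpr ⟨hSne.choose⟩
    exact_mod_cast h0
  have hsplit : costOf cost (T \ T') + costOf cost T' = costOf cost T := by
    rw [costOf, costOf, costOf]
    exact Finset.sum_sdiff hT'
  have hT'nonneg : (0 : ℝ) ≤ costOf cost T' :=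
    Finset.sum_nonneg fun c _ => by exact_mod_cast (hpos c).le
  have hTT'nonneg : (0 : ℝ) ≤ costOf cost (T \ T') :=
    Finset.sum_nonneg fun c _ => by exact_mod_cast (hpos c).le
  set S2 := S \ S1 with hS2
  have hcard2 : (S2.card : ℝ) = (S.card : ℝ) - (S1.card : ℝ) := by
    rw [hS2, Finset.card_sdiff_of_subset hS1S, Nat.cast_sub (Finset.card_le_card hS1S)]
  have h2 : costOf cost (T \ T') * (Fintype.card V : ℝ) < (S2.card : ℝ) := by
    have hsub : costOf cost (T \ T') = costOf cost T - costOf cost T' := by linarith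
    rw [hcard2, hsub, sub_mul]
    linarith
  have hS2ne : S2.Nonempty := by
    rw [← Finset.card_pos]
    have hlt : (0 : ℝ) < (S2.card : ℝ) :=
      lt_of_le_of_lt (mul_nonneg hTT'nonneg hnpos.le) h2
    exact_mod_cast hlt
  have hut2 : ∀ i ∈ S2, β ≤ util u i (T \ T') := by
    intro i hi
    rw [hS2, Finset.mem_sdiff] at hi
    obtain ⟨hiS, hiS1⟩ := hi
    have hzero : ∀ c ∈ T', u i c = 0 := by
      intro c hc
      by_contra h0
      exact hiS1 (Finset.mem_filter.mpr
        ⟨hiS, c, hc, lt_of_le_of_ne (hu i c) (Ne.symm h0)⟩)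
    have hsum : ∑ c ∈ T \ T', u i c + ∑ c ∈ T', u i c = ∑ c ∈ T, u i c :=
      Finset.sum_sdiff hT'
    have hz : ∑ c ∈ T', u i c = 0 := Finset.sum_eq_zero hzero
    have hβi := hSut i hiS
    simp only [util] at hβi ⊢
    linarith
  have hwc2 : weaklyCohesive cost u β S2 (T \ T') := ⟨hS2ne, h2.le, hut2⟩
  have hge := hmin S2 Finset.sdiff_subset (T \ T') Finset.sdiff_subset hwc2
  have h3 : costOf cost T' ≤ 0 := by linarith
  have h5 : (0 : ℝ) ≤ (S1.card : ℝ) := Nat.cast_nonneg _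
  nlinarith

lemma GCR_inv (cost : C → ℚ) (u : V → C → ℝ) (hvalid : validPB cost u)
    (s : Finset C × Finset V × Finset C)
    (h : Relation.ReflTransGen (GCRStep cost u) (∅, Finset.univ, Finset.univ) s) :
    Disjoint s.1 s.2.2 ∧ ∃ p : V → C → ℝ,
      (∀ i c, 0 ≤ p i c) ∧ (∀ i c, u i c = 0 → p i c = 0) ∧
      (∀ i ∈ s.2.1, ∀ c, p i c = 0) ∧
      (∀ i, ∑ c, p i c ≤ 1 / (Fintype.card V : ℝ)) ∧
      (∀ c ∈ s.1, ∑ i, p i c = (cost c : ℝ)) ∧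
      (∀ c ∉ s.1, ∑ i, p i c = 0) := by
  induction h with
  | refl =>
    refine ⟨by simp, fun _ _ => 0, fun _ _ => le_rfl, fun _ _ _ => rfl,
      fun _ _ _ => rfl, fun i => ?_, fun c hc => ?_, fun c _ => by simp⟩
    · simp only [Finset.sum_const_zero]
      positivity
    · simp at hc
  | @tail b s' hsteps hstep ih =>
    obtain ⟨hdisj, p, hp0, hpu, hpAV, hpb, hpW, hpnW⟩ := ih
    obtain ⟨β, S, T, hβ, hSsub, hTsub, hcoh, hmax, hmin, rfl⟩ := hstep
    have hn : 0 < Fintype.card V := Fintype.card_pos_iff.mpr ⟨hcoh.1.choose⟩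
    have hall := hall_from_step cost u hvalid.1 (fun i c => (hvalid.2.1 i c).1) β S T hcoh
      (fun S' hS' T' hT' hw => hmin S' T' (hS'.trans hSsub) (hT'.trans hTsub) hw)
    obtain ⟨q, hq0, hqu, hqS, hqT, hqb, hqc⟩ :=
      step_pay cost u hvalid.1 S T hn hall
    refine ⟨?_, fun i c => p i c + q i c, ?_, ?_, ?_, ?_, ?_, ?_⟩
    · dsimp only
      rw [Finset.disjoint_union_left]
      exact ⟨hdisj.mono_right Finset.sdiff_subset, disjoint_sdiff_self_right⟩
    · intro i c
      exact add_nonneg (hp0 i c) (hq0 i c)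
    · intro i c hu0
      dsimp only
      rw [hpu i c hu0, hqu i c hu0, add_zero]
    · intro i hi c
      dsimp only at hi
      rw [Finset.mem_sdiff] at hi
      dsimp only
      rw [hpAV i hi.1 c, hqS i c hi.2, add_zero]
    · intro i
      dsimp only
      rw [Finset.sum_add_distrib]
      by_cases hiS : i ∈ S
      · have hpz : ∑ c, p i c = 0 :=
          Finset.sum_eq_zero fun c _ => hpAV i (hSsub hiS) c
        rw [hpz, zero_add]
        exact hqb i
      · have hqz : ∑ c, q i c = 0 :=
          Finset.sum_eq_zero fun c _ => hqS i c hiS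
        rw [hqz, add_zero]
        exact hpb i
    · intro c hc
      dsimp only at hc ⊢
      rw [Finset.mem_union] at hc
      rw [Finset.sum_add_distrib]
      rcases hc with hc | hc
      · have hcT : c ∉ T := fun hcT =>
          (Finset.disjoint_left.mp hdisj hc) (hTsub hcT)
        rw [hpW c hc, Finset.sum_eq_zero fun i _ => hqT i c hcT, add_zero]
      · have hcW : c ∉ b.1 := fun hcW =>
          (Finset.disjoint_left.mp hdisj hcW) (hTsub hc)
        rw [hpnW c hcW, hqc c hc, zero_add]
    · intro c hc
      dsimp only at hc ⊢
      rw [Finset.mem_union] at hc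
      push_neg at hc
      rw [Finset.sum_add_distrib, hpnW c hc.1,
        Finset.sum_eq_zero fun i _ => hqT i c hc.2, add_zero]

end Aux


/-- For every outcome of the Greedy Cohesive Rule there exist
nonnegative payment functions satisfying conditions (C1)-(C4) of a price system
with initial budget b = 1. -/
theorem GCR_partial_price_system
    {V C : Type*} [Fintype V] [DecidableEq V] [Fintype C] [DecidableEq C]
    (cost : C → ℚ) (u : V → C → ℝ) (hvalid : validPB cost u)
    (W : Finset C) (hW : GCROutcome cost u W) :
    ∃ p : V → C → ℝ,
      (∀ i c, 0 ≤ p i c) ∧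
      (∀ i c, u i c = 0 → p i c = 0) ∧
      (∀ i, ∑ c, p i c ≤ 1 / (Fintype.card V : ℝ)) ∧
      (∀ c ∈ W, ∑ i, p i c = (cost c : ℝ)) ∧
      (∀ c ∉ W, ∑ i, p i c = 0) := by
  obtain ⟨AV, AC, hsteps, hterm⟩ := hW
  obtain ⟨-, p, hp0, hpu, -, hpb, hpW, hpnW⟩ := GCR_inv cost u hvalid (W, AV, AC) hsteps
  exact ⟨p, hp0, hpu, hpb, hpW, hpnW⟩
end

section
/- Every outcome W produced by an execution of the Greedy Cohesive Rule can be completed to a priceable outcome: there exists a feasible outcome W' with W ⊆ W' such that W' is priceable. -/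
open Finset

section AuxGCR

variable {V C : Type*} [Fintype V] [DecidableEq V] [Fintype C] [DecidableEq C]

lemma costOf_nonneg {cost : C → ℚ} (h : ∀ c, 0 < cost c) (T : Finset C) :
    0 ≤ costOf cost T :=
  Finset.sum_nonneg fun c _ => le_of_lt (by exact_mod_cast h c)

lemma costOf_pos {cost : C → ℚ} (h : ∀ c, 0 < cost c) {T : Finset C} (hT : T.Nonempty) :
    0 < costOf cost T :=
  Finset.sum_pos (fun c _ => by exact_mod_cast h c) hT

lemma costOf_sdiff {cost : C → ℚ} {T' T : Finset C} (h : T' ⊆ T) :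
    costOf cost (T \ T') = costOf cost T - costOf cost T' := by
  have := Finset.sum_sdiff (f := fun c => ((cost c : ℝ))) h
  unfold costOf
  linarith

lemma util_sdiff {u : V → C → ℝ} {i : V} {T' T : Finset C} (h : T' ⊆ T) :
    util u i (T \ T') = util u i T - util u i T' := by
  have := Finset.sum_sdiff (f := fun c => u i c) h
  unfold util
  linarith

/-- Hall-type condition derived from weak cohesiveness and cost-minimality. -/
lemma hall_card (cost : C → ℚ) (u : V → C → ℝ)
    (hcost : ∀ c, 0 < cost c) (hu : ∀ i c, 0 ≤ u i c)
    (β : ℝ) (S : Finset V) (T : Finset C) (hβ : 0 < β)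
    (hcoh : weaklyCohesive cost u β S T)
    (hmin : ∀ S' T', S' ⊆ S → T' ⊆ T → weaklyCohesive cost u β S' T' →
      costOf cost T ≤ costOf cost T')
    (T' : Finset C) (hT' : T' ⊆ T) :
    costOf cost T' * (Fintype.card V : ℝ) ≤
      ((S.filter fun i => ∃ c ∈ T', 0 < u i c).card : ℝ) := by
  classical
  obtain ⟨hSne, hScard, hutil⟩ := hcoh
  rcases T'.eq_empty_or_nonempty with rfl | hT'ne
  · simp [costOf]
  by_contra hlt
  push_neg at hlt
  set NS := S.filter fun i => ∃ c ∈ T', 0 < u i c with hNSdef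
  have hNSsub : NS ⊆ S := Finset.filter_subset _ _
  have hzero : ∀ i ∈ S \ NS, ∀ c ∈ T', u i c = 0 := by
    intro i hi c hc
    have hmem := Finset.mem_sdiff.mp hi
    have h2 : ¬ ∃ c ∈ T', 0 < u i c := fun h =>
      hmem.2 (Finset.mem_filter.mpr ⟨hmem.1, h⟩)
    push_neg at h2
    exact le_antisymm (h2 c hc) (hu i c)
  have hTT' : T' ≠ T := by
    rintro rfl
    have hEq : NS = S := by
      apply Finset.Subset.antisymm hNSsub
      intro i hi
      refine Finset.mem_filter.mpr ⟨hi, ?_⟩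
      by_contra h
      push_neg at h
      have hle : util u i T' ≤ 0 := Finset.sum_nonpos fun c hc => h c hc
      exact absurd (lt_of_lt_of_le hβ (hutil i hi)) (not_lt.mpr hle)
    rw [hEq] at hlt
    exact absurd hScard (not_le.mpr hlt)
  have hT''ne : (T \ T').Nonempty := by
    rw [Finset.sdiff_nonempty]
    intro hsub
    exact hTT' (Finset.Subset.antisymm hT' hsub)
  have hcard1 : ((S \ NS).card : ℝ) = (S.card : ℝ) - (NS.card : ℝ) := by
    rw [Finset.card_sdiff_of_subset hNSsub]
    exact_mod_cast Nat.cast_sub (Finset.card_le_card hNSsub)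
  have hS''card : costOf cost (T \ T') * (Fintype.card V : ℝ) < ((S \ NS).card : ℝ) := by
    rw [costOf_sdiff hT', hcard1]
    nlinarith
  have hS''ne : (S \ NS).Nonempty := by
    rw [← Finset.card_pos]
    have h0 : (0:ℝ) ≤ costOf cost (T \ T') * (Fintype.card V : ℝ) :=
      mul_nonneg (costOf_nonneg hcost _) (Nat.cast_nonneg _)
    have : (0:ℝ) < ((S \ NS).card : ℝ) := lt_of_le_of_lt h0 hS''card
    exact_mod_cast this
  have hcoh'' : weaklyCohesive cost u β (S \ NS) (T \ T') := by
    refine ⟨hS''ne, le_of_lt hS''card, fun i hi => ?_⟩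
    have hiS : i ∈ S := (Finset.mem_sdiff.mp hi).1
    have hzT' : util u i T' = 0 :=
      Finset.sum_eq_zero fun c hc => hzero i hi c hc
    rw [util_sdiff hT', hzT']
    have := hutil i hiS
    linarith
  have := hmin (S \ NS) (T \ T') Finset.sdiff_subset Finset.sdiff_subset hcoh''
  rw [costOf_sdiff hT'] at this
  have hpos : 0 < costOf cost T' := costOf_pos hcost hT'ne
  linarith

set_option maxHeartbeats 1000000 in
/-- Existence of a payment scheme for a cohesive group, via Hall's theorem. -/
lemma exists_payment (cost : C → ℚ) (u : V → C → ℝ) (hn : 0 < Fintype.card V)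
    (hcost : ∀ c, 0 < cost c) (hu : ∀ i c, 0 ≤ u i c)
    (β : ℝ) (S : Finset V) (T : Finset C) (hβ : 0 < β)
    (hcoh : weaklyCohesive cost u β S T)
    (hmin : ∀ S' T', S' ⊆ S → T' ⊆ T → weaklyCohesive cost u β S' T' →
      costOf cost T ≤ costOf cost T') :
    ∃ q : V → C → ℝ, (∀ i c, 0 ≤ q i c) ∧
      (∀ i c, q i c ≠ 0 → i ∈ S ∧ c ∈ T ∧ 0 < u i c) ∧
      (∀ i, ∑ c, q i c ≤ 1 / (Fintype.card V : ℝ)) ∧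
      (∀ c ∈ T, ∑ i, q i c = (cost c : ℝ)) := by
  classical
  set n := Fintype.card V with hn'
  set d : ℕ := ∏ c ∈ T, (cost c).den with hd
  have hdpos : 0 < d := Finset.prod_pos fun c _ => (cost c).pos
  set M : ℕ := n * d with hM
  have hMpos : 0 < M := Nat.mul_pos hn hdpos
  have hMR : ((M : ℕ) : ℝ) = (n : ℝ) * (d : ℝ) := by rw [hM]; push_cast; ring
  have hMne : ((M : ℕ) : ℝ) ≠ 0 := by positivity
  set D : C → ℕ := fun c => (cost c).num.toNat * ((∏ x ∈ T.erase c, (cost x).den) * n)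
    with hD
  have hDval : ∀ c ∈ T, ((D c : ℕ) : ℚ) = cost c * M := by
    intro c hc
    have hprod : ((cost c).den : ℚ) * (∏ x ∈ T.erase c, ((cost x).den : ℚ)) =
        (d : ℚ) := by
      rw [hd]
      push_cast
      exact Finset.mul_prod_erase T (fun x => ((cost x).den : ℚ)) hc
    have hnum : ((cost c).num.toNat : ℚ) = cost c * (cost c).den := by
      have h1 : (((cost c).num.toNat : ℕ) : ℚ) = (((cost c).num : ℤ) : ℚ) := by
        exact_mod_cast congrArg (fun z : ℤ => (z : ℚ))
          (Int.toNat_of_nonneg (le_of_lt (Rat.num_pos.mpr (hcost c))))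
      rw [h1]
      exact (Rat.mul_den_eq_num (cost c)).symm
    have : ((D c : ℕ) : ℚ) =
        ((cost c).num.toNat : ℚ) * ((∏ x ∈ T.erase c, ((cost x).den : ℚ)) * (n : ℚ)) := by
      rw [hD]; push_cast; ring
    rw [this, hnum]
    have hMQ : ((M : ℕ) : ℚ) = (n : ℚ) * (d : ℚ) := by rw [hM]; push_cast; ring
    rw [hMQ, ← hprod]
    ring
  have hDvalR : ∀ c ∈ T, ((D c : ℕ) : ℝ) = (cost c : ℝ) * ((M : ℕ) : ℝ) := by
    intro c hc
    have := hDval c hc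
    exact_mod_cast congrArg (fun q : ℚ => (q : ℝ)) this
  -- the bipartite Hall setup
  set t : (Σ c : {x // x ∈ T}, Fin (D c.1)) → Finset (V × Fin d) :=
    fun l => (S.filter fun i => 0 < u i l.1.1) ×ˢ Finset.univ with htdef
  have hall : ∀ s : Finset (Σ c : {x // x ∈ T}, Fin (D c.1)),
      s.card ≤ (s.biUnion t).card := by
    intro s
    set T' : Finset C := s.image fun l => (l.1.1 : C) with hT'def
    have hT'T : T' ⊆ T := by
      intro c hc
      obtain ⟨l, _, rfl⟩ := Finset.mem_image.mp hc
      exact l.1.2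
    set NS := S.filter fun i => ∃ c ∈ T', 0 < u i c with hNSdef
    have hA : s.card ≤ ∑ c ∈ T', D c := by
      rw [Finset.card_eq_sum_card_fiberwise
        (f := fun l => (l.1.1 : C)) (t := T') (fun l hl => Finset.mem_image_of_mem _ hl)]
      refine Finset.sum_le_sum fun c hc => ?_
      have hle : (s.filter fun l => (l.1.1 : C) = c).card ≤ (Finset.range (D c)).card := by
        apply Finset.card_le_card_of_injOn (fun l => (l.2 : ℕ))
        · intro l hl
          have hlc : (l.1.1 : C) = c := (Finset.mem_filter.mp hl).2
          rw [Finset.mem_coe, Finset.mem_range, ← hlc]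
          exact l.2.isLt
        · intro l hl m hm hlm
          have hlc : (l.1.1 : C) = c := (Finset.mem_filter.mp (Finset.mem_coe.mp hl)).2
          have hmc : (m.1.1 : C) = c := (Finset.mem_filter.mp (Finset.mem_coe.mp hm)).2
          obtain ⟨a, j⟩ := l
          obtain ⟨b, k⟩ := m
          have hab : a = b := Subtype.ext (hlc.trans hmc.symm)
          subst hab
          have : j = k := Fin.val_injective hlm
          rw [this]
      simpa using hle
    have hB : ((∑ c ∈ T', D c : ℕ) : ℝ) ≤ ((NS.card * d : ℕ) : ℝ) := by
      push_cast
      have h1 : (∑ c ∈ T', ((D c : ℕ) : ℝ)) = costOf cost T' * (n : ℝ) * (d : ℝ) := by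
        unfold costOf
        rw [Finset.sum_mul, Finset.sum_mul]
        refine Finset.sum_congr rfl fun c hc => ?_
        rw [hDvalR c (hT'T hc), hMR]
        ring
      rw [h1]
      have h2 := hall_card cost u hcost hu β S T hβ ⟨hcoh.1, hcoh.2.1, hcoh.2.2⟩ hmin T' hT'T
      rw [← hn'] at h2
      nlinarith [h2, Nat.cast_nonneg (α := ℝ) d]
    have hC : NS ×ˢ (Finset.univ : Finset (Fin d)) ⊆ s.biUnion t := by
      intro x hx
      obtain ⟨hx1, _⟩ := Finset.mem_product.mp hx
      obtain ⟨hxS, c, hcT', hxu⟩ := Finset.mem_filter.mp hx1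
      obtain ⟨l, hls, hlc⟩ := Finset.mem_image.mp hcT'
      refine Finset.mem_biUnion.mpr ⟨l, hls, ?_⟩
      refine Finset.mem_product.mpr ⟨Finset.mem_filter.mpr ⟨hxS, ?_⟩, Finset.mem_univ _⟩
      rw [hlc]
      exact hxu
    have hBn : (∑ c ∈ T', D c) ≤ NS.card * d := by exact_mod_cast hB
    calc s.card ≤ ∑ c ∈ T', D c := hA
      _ ≤ NS.card * d := hBn
      _ = (NS ×ˢ (Finset.univ : Finset (Fin d))).card := by
          rw [Finset.card_product, Finset.card_univ, Fintype.card_fin]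
      _ ≤ (s.biUnion t).card := Finset.card_le_card hC
  obtain ⟨f, hfinj, hft⟩ := (Finset.all_card_le_biUnion_card_iff_exists_injective t).mp hall
  have hfS : ∀ l, (f l).1 ∈ S ∧ 0 < u (f l).1 l.1.1 := by
    intro l
    have := hft l
    rw [htdef] at this
    obtain ⟨h1, _⟩ := Finset.mem_product.mp this
    exact ⟨(Finset.mem_filter.mp h1).1, (Finset.mem_filter.mp h1).2⟩
  set q : V → C → ℝ := fun i c => if c ∈ T then
      ((Finset.univ.filter fun l : (Σ c : {x // x ∈ T}, Fin (D c.1)) =>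
        (l.1.1 : C) = c ∧ (f l).1 = i).card : ℝ) / M else 0 with hq
  have hqdef : ∀ i c, q i c = if c ∈ T then
      ((Finset.univ.filter fun l : (Σ c : {x // x ∈ T}, Fin (D c.1)) =>
        (l.1.1 : C) = c ∧ (f l).1 = i).card : ℝ) / M else 0 := fun i c => rfl
  refine ⟨q, ?_, ?_, ?_, ?_⟩
  · intro i c
    rw [hqdef]
    split
    · positivity
    · exact le_refl 0
  · intro i c h
    rw [hqdef] at h
    by_cases hcT : c ∈ T
    · rw [if_pos hcT] at h
      have hcard : (Finset.univ.filter fun l : (Σ c : {x // x ∈ T}, Fin (D c.1)) =>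
          (l.1.1 : C) = c ∧ (f l).1 = i).card ≠ 0 := by
        intro h0
        rw [h0] at h
        simp at h
      obtain ⟨l, hl⟩ := Finset.card_ne_zero.mp hcard
      obtain ⟨hlc, hli⟩ := (Finset.mem_filter.mp hl).2
      obtain ⟨hS1, hu1⟩ := hfS l
      rw [hli] at hS1
      rw [hlc, hli] at hu1
      exact ⟨hS1, hcT, hu1⟩
    · rw [if_neg hcT] at h
      exact absurd rfl h
  · intro i
    simp only [hqdef]
    have hsum1 : (∑ c, if c ∈ T then
        ((Finset.univ.filter fun l : (Σ c : {x // x ∈ T}, Fin (D c.1)) =>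
          (l.1.1 : C) = c ∧ (f l).1 = i).card : ℝ) / M else 0) =
        ∑ c ∈ T, ((Finset.univ.filter fun l : (Σ c : {x // x ∈ T}, Fin (D c.1)) =>
          (l.1.1 : C) = c ∧ (f l).1 = i).card : ℝ) / M := by
      rw [Finset.sum_ite_mem, Finset.univ_inter]
    rw [hsum1, ← Finset.sum_div]
    have hsum2 : (∑ c ∈ T, ((Finset.univ.filter fun l : (Σ c : {x // x ∈ T}, Fin (D c.1)) =>
        (l.1.1 : C) = c ∧ (f l).1 = i).card : ℕ)) =
        (Finset.univ.filter fun l : (Σ c : {x // x ∈ T}, Fin (D c.1)) =>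
          (f l).1 = i).card := by
      rw [Finset.card_eq_sum_card_fiberwise
        (f := fun l => (l.1.1 : C)) (t := T) (fun l _ => l.1.2)]
      refine Finset.sum_congr rfl fun c hc => ?_
      rw [Finset.filter_filter]
      congr 1
      apply Finset.filter_congr
      intro l _
      constructor
      · exact fun h2 => ⟨h2.2, h2.1⟩
      · exact fun h2 => ⟨h2.2, h2.1⟩
    have hle : ((Finset.univ.filter fun l : (Σ c : {x // x ∈ T}, Fin (D c.1)) =>
        (f l).1 = i).card) ≤ d := by
      have h3 : ((Finset.univ.filter fun l : (Σ c : {x // x ∈ T}, Fin (D c.1)) =>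
          (f l).1 = i).card) ≤ (Finset.univ : Finset (Fin d)).card := by
        apply Finset.card_le_card_of_injOn (fun l => (f l).2)
        · intro l _
          exact Finset.mem_univ _
        · intro l hl m hm hlm
          have hli : (f l).1 = i := (Finset.mem_filter.mp (Finset.mem_coe.mp hl)).2
          have hmi : (f m).1 = i := (Finset.mem_filter.mp (Finset.mem_coe.mp hm)).2
          apply hfinj
          exact Prod.ext (hli.trans hmi.symm) hlm
      rwa [Finset.card_univ, Fintype.card_fin] at h3
    have hcast : (∑ c ∈ T, ((Finset.univ.filter fun l : (Σ c : {x // x ∈ T}, Fin (D c.1)) =>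
        (l.1.1 : C) = c ∧ (f l).1 = i).card : ℝ)) ≤ (d : ℝ) := by
      have : (∑ c ∈ T, ((Finset.univ.filter fun l : (Σ c : {x // x ∈ T}, Fin (D c.1)) =>
          (l.1.1 : C) = c ∧ (f l).1 = i).card : ℕ)) ≤ d := hsum2 ▸ hle
      exact_mod_cast this
    have hfin : (d : ℝ) / ((M : ℕ) : ℝ) = 1 / (n : ℝ) := by
      rw [hMR]
      field_simp
    calc (∑ c ∈ T, ((Finset.univ.filter fun l : (Σ c : {x // x ∈ T}, Fin (D c.1)) =>
          (l.1.1 : C) = c ∧ (f l).1 = i).card : ℝ)) / ((M : ℕ) : ℝ)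
        ≤ (d : ℝ) / ((M : ℕ) : ℝ) := by
          have hMpos' : (0:ℝ) < ((M : ℕ) : ℝ) := by positivity
          exact (div_le_div_iff_of_pos_right hMpos').mpr hcast
      _ = 1 / (n : ℝ) := hfin
  · intro c hc
    simp only [hqdef]
    have hsum3 : (∑ i, if c ∈ T then
        ((Finset.univ.filter fun l : (Σ c : {x // x ∈ T}, Fin (D c.1)) =>
          (l.1.1 : C) = c ∧ (f l).1 = i).card : ℝ) / M else 0) =
        ∑ i, ((Finset.univ.filter fun l : (Σ c : {x // x ∈ T}, Fin (D c.1)) =>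
          (l.1.1 : C) = c ∧ (f l).1 = i).card : ℝ) / M := by
      refine Finset.sum_congr rfl fun i _ => ?_
      rw [if_pos hc]
    rw [hsum3, ← Finset.sum_div]
    have hsum4 : (∑ i, ((Finset.univ.filter fun l : (Σ c : {x // x ∈ T}, Fin (D c.1)) =>
        (l.1.1 : C) = c ∧ (f l).1 = i).card : ℕ)) =
        (Finset.univ.filter fun l : (Σ c : {x // x ∈ T}, Fin (D c.1)) =>
          (l.1.1 : C) = c).card := by
      rw [Finset.card_eq_sum_card_fiberwise
        (f := fun l => (f l).1) (t := Finset.univ) (fun l _ => Finset.mem_univ _)]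
      refine Finset.sum_congr rfl fun i _ => ?_
      rw [Finset.filter_filter]
    have hfib : (Finset.univ.filter fun l : (Σ c : {x // x ∈ T}, Fin (D c.1)) =>
        (l.1.1 : C) = c).card = D c := by
      rw [← Finset.card_range (D c)]
      refine Finset.card_bij' (fun l _ => ((l.2 : ℕ)))
        (fun m hm => (⟨⟨c, hc⟩, ⟨m, Finset.mem_range.mp hm⟩⟩ :
          (Σ c : {x // x ∈ T}, Fin (D c.1)))) ?_ ?_ ?_ ?_
      · intro l hl
        have hlc : (l.1.1 : C) = c := (Finset.mem_filter.mp hl).2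
        show (l.2 : ℕ) ∈ Finset.range (D c)
        rw [Finset.mem_range, ← hlc]
        exact l.2.isLt
      · intro m hm
        exact Finset.mem_filter.mpr ⟨Finset.mem_univ _, rfl⟩
      · rintro ⟨⟨a, ha⟩, j⟩ hl
        have hlc : a = c := (Finset.mem_filter.mp hl).2
        subst hlc
        simp
      · intro m hm
        rfl
    have hcast2 : (∑ i, ((Finset.univ.filter fun l : (Σ c : {x // x ∈ T}, Fin (D c.1)) =>
        (l.1.1 : C) = c ∧ (f l).1 = i).card : ℝ)) = ((D c : ℕ) : ℝ) := by
      rw [← hsum4] at hfib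
      exact_mod_cast hfib
    rw [hcast2, hDvalR c hc]
    field_simp

end AuxGCR

section AuxGCR2

variable {V C : Type*} [Fintype V] [DecidableEq V] [Fintype C] [DecidableEq C]

/-- Invariant on partial payment schemes. -/
def PayInv (cost : C → ℚ) (u : V → C → ℝ) (W : Finset C) (p : V → C → ℝ) : Prop :=
  (∀ i c, 0 ≤ p i c) ∧ (∀ i c, p i c ≠ 0 → 0 < u i c) ∧
  (∀ i, ∑ c, p i c ≤ 1 / (Fintype.card V : ℝ)) ∧
  (∀ c ∈ W, ∑ i, p i c = (cost c : ℝ)) ∧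
  (∀ c ∉ W, ∀ i, p i c = 0)

/-- Invariant along a GCR execution. -/
def GInv (cost : C → ℚ) (u : V → C → ℝ) (s : Finset C × Finset V × Finset C) : Prop :=
  s.2.2 = Finset.univ \ s.1 ∧
  ∃ p : V → C → ℝ, PayInv cost u s.1 p ∧ ∀ i ∈ s.2.1, ∀ c, p i c = 0

lemma GInv_step (cost : C → ℚ) (u : V → C → ℝ) (hn : 0 < Fintype.card V)
    (hcost : ∀ c, 0 < cost c) (hu : ∀ i c, 0 ≤ u i c)
    {s t : Finset C × Finset V × Finset C} (hstep : GCRStep cost u s t)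
    (hinv : GInv cost u s) : GInv cost u t := by
  classical
  obtain ⟨β, S, T, hβ, hSsub, hTsub, hcoh, hmax, hminc, ht⟩ := hstep
  obtain ⟨hAC, p, ⟨hp0, hpsupp, hprow, hpcol, hpout⟩, hpAV⟩ := hinv
  obtain ⟨q, hq0, hqsupp, hqrow, hqcol⟩ := exists_payment cost u hn hcost hu β S T hβ hcoh
    (fun S' T' hS' hT' h => hminc S' T' (hS'.trans hSsub) (hT'.trans hTsub) h)
  have hTW : ∀ c ∈ T, c ∉ s.1 := by
    intro c hc
    have := hTsub hc
    rw [hAC] at this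
    exact (Finset.mem_sdiff.mp this).2
  subst ht
  constructor
  · show s.2.2 \ T = Finset.univ \ (s.1 ∪ T)
    rw [hAC]
    ext c
    simp only [Finset.mem_sdiff, Finset.mem_univ, Finset.mem_union, true_and]
    tauto
  · set p2 : V → C → ℝ := fun i c => p i c + q i c with hp2
    have hp2def : ∀ i c, p2 i c = p i c + q i c := fun _ _ => rfl
    refine ⟨p2, ⟨?_, ?_, ?_, ?_, ?_⟩, ?_⟩
    · intro i c
      rw [hp2def]
      exact add_nonneg (hp0 i c) (hq0 i c)
    · intro i c h
      rw [hp2def] at h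
      by_cases hq : q i c = 0
      · rw [hq, add_zero] at h
        exact hpsupp i c h
      · exact (hqsupp i c hq).2.2
    · intro i
      simp only [hp2def]
      rw [Finset.sum_add_distrib]
      by_cases hiS : i ∈ S
      · have hpz : (∑ c, p i c) = 0 :=
          Finset.sum_eq_zero fun c _ => hpAV i (hSsub hiS) c
        rw [hpz, zero_add]
        exact hqrow i
      · have hqz : (∑ c, q i c) = 0 := by
          refine Finset.sum_eq_zero fun c _ => ?_
          by_contra h
          exact hiS (hqsupp i c h).1
        rw [hqz, add_zero]
        exact hprow i
    · intro c hc
      simp only [hp2def]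
      rw [Finset.sum_add_distrib]
      rcases Finset.mem_union.mp hc with hcW | hcT
      · have hqz : (∑ i, q i c) = 0 := by
          refine Finset.sum_eq_zero fun i _ => ?_
          by_contra h
          exact hTW c (hqsupp i c h).2.1 hcW
        rw [hqz, add_zero]
        exact hpcol c hcW
      · have hpz : (∑ i, p i c) = 0 :=
          Finset.sum_eq_zero fun i _ => hpout c (hTW c hcT) i
        rw [hpz, zero_add]
        exact hqcol c hcT
    · intro c hc i
      have hcW : c ∉ s.1 := fun h => hc (Finset.mem_union_left _ h)
      have hcT : c ∉ T := fun h => hc (Finset.mem_union_right _ h)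
      have h1 : p i c = 0 := hpout c hcW i
      have h2 : q i c = 0 := by
        by_contra h
        exact hcT (hqsupp i c h).2.1
      rw [hp2def, h1, h2, add_zero]
    · intro i hi c
      have hiAV : i ∈ s.2.1 := (Finset.mem_sdiff.mp hi).1
      have hiS : i ∉ S := (Finset.mem_sdiff.mp hi).2
      have h2 : q i c = 0 := by
        by_contra h
        exact hiS (hqsupp i c h).1
      rw [hp2def, hpAV i hiAV c, h2, add_zero]

lemma GInv_reaches (cost : C → ℚ) (u : V → C → ℝ) (hn : 0 < Fintype.card V)
    (hcost : ∀ c, 0 < cost c) (hu : ∀ i c, 0 ≤ u i c)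
    {s t : Finset C × Finset V × Finset C}
    (h : Relation.ReflTransGen (GCRStep cost u) s t) (hinv : GInv cost u s) :
    GInv cost u t := by
  induction h with
  | refl => exact hinv
  | tail _ hstep ih => exact GInv_step cost u hn hcost hu hstep ih

/-- Completion: extend a partially paid outcome until condition (C5) holds. -/
lemma complete_priceable (cost : C → ℚ) (u : V → C → ℝ) (hn : 0 < Fintype.card V)
    (hcost : ∀ c, 0 < cost c) (hu : ∀ i c, 0 ≤ u i c) :
    ∀ (k : ℕ) (W' : Finset C) (p : V → C → ℝ),
      (Finset.univ \ W').card ≤ k → PayInv cost u W' p →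
      ∃ (W'' : Finset C) (p'' : V → C → ℝ), W' ⊆ W'' ∧ PayInv cost u W'' p'' ∧
        ∀ c ∉ W'', (∑ i ∈ Finset.univ.filter (fun i => 0 < u i c),
          (1 / (Fintype.card V : ℝ) - ∑ c' ∈ W'', p'' i c')) ≤ (cost c : ℝ) := by
  classical
  intro k
  induction k with
  | zero =>
    intro W' p hcard hinv
    refine ⟨W', p, Finset.Subset.refl _, hinv, fun c hc => absurd ?_ hc⟩
    have : Finset.univ \ W' = ∅ := Finset.card_eq_zero.mp (Nat.le_zero.mp hcard)
    by_contra h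
    have : c ∈ Finset.univ \ W' := Finset.mem_sdiff.mpr ⟨Finset.mem_univ _, h⟩
    rw [‹Finset.univ \ W' = ∅›] at this
    exact absurd this (Finset.notMem_empty c)
  | succ k ih =>
    intro W' p hcard hinv
    obtain ⟨hp0, hpsupp, hprow, hpcol, hpout⟩ := hinv
    by_cases hdone : ∀ c ∉ W', (∑ i ∈ Finset.univ.filter (fun i => 0 < u i c),
        (1 / (Fintype.card V : ℝ) - ∑ c' ∈ W', p i c')) ≤ (cost c : ℝ)
    · exact ⟨W', p, Finset.Subset.refl _, ⟨hp0, hpsupp, hprow, hpcol, hpout⟩, hdone⟩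
    push_neg at hdone
    obtain ⟨c₀, hc₀, hL⟩ := hdone
    -- leftover of each voter
    set ℓ : V → ℝ := fun i => 1 / (Fintype.card V : ℝ) - ∑ c' ∈ W', p i c' with hℓ
    have hrowW : ∀ i, (∑ c' ∈ W', p i c') = ∑ c', p i c' := by
      intro i
      refine Finset.sum_subset (Finset.subset_univ W') ?_
      intro c hcu hcW
      exact hpout c hcW i
    have hℓnn : ∀ i, 0 ≤ ℓ i := by
      intro i
      rw [hℓ]
      dsimp only
      rw [hrowW i]
      have := hprow i
      linarith
    set F := Finset.univ.filter (fun i => 0 < u i c₀) with hF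
    set L : ℝ := ∑ i ∈ F, ℓ i with hLdef
    have hLpos : (cost c₀ : ℝ) < L := hL
    have hc₀pos : (0:ℝ) < (cost c₀ : ℝ) := by exact_mod_cast hcost c₀
    have hLpos' : (0:ℝ) < L := lt_trans hc₀pos hLpos
    have hLne : L ≠ 0 := ne_of_gt hLpos'
    set p' : V → C → ℝ := fun i c =>
      p i c + (if c = c₀ ∧ 0 < u i c₀ then ℓ i * (cost c₀ : ℝ) / L else 0) with hp'
    have hp'def : ∀ i c, p' i c =
        p i c + (if c = c₀ ∧ 0 < u i c₀ then ℓ i * (cost c₀ : ℝ) / L else 0) :=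
      fun i c => rfl
    have haddnn : ∀ i c, (0:ℝ) ≤ (if c = c₀ ∧ 0 < u i c₀ then ℓ i * (cost c₀ : ℝ) / L else 0) := by
      intro i c
      split
      · have := hℓnn i
        positivity
      · exact le_refl 0
    have hinv' : PayInv cost u (insert c₀ W') p' := by
      refine ⟨?_, ?_, ?_, ?_, ?_⟩
      · intro i c
        rw [hp'def]
        exact add_nonneg (hp0 i c) (haddnn i c)
      · intro i c h
        rw [hp'def] at h
        by_cases hx : c = c₀ ∧ 0 < u i c₀
        · rcases hx with ⟨rfl, hx2⟩
          exact hx2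
        · rw [if_neg hx, add_zero] at h
          exact hpsupp i c h
      · intro i
        have hsplit : (∑ c, p' i c) = (∑ c, p i c) +
            ∑ c, (if c = c₀ ∧ 0 < u i c₀ then ℓ i * (cost c₀ : ℝ) / L else 0) := by
          rw [← Finset.sum_add_distrib]
        rw [hsplit]
        have hite : (∑ c, (if c = c₀ ∧ 0 < u i c₀ then ℓ i * (cost c₀ : ℝ) / L else 0)) =
            (if 0 < u i c₀ then ℓ i * (cost c₀ : ℝ) / L else 0) := by
          rw [Finset.sum_congr rfl (fun c _ => ite_and (c = c₀) (0 < u i c₀)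
            (ℓ i * (cost c₀ : ℝ) / L) 0), Finset.sum_ite_eq' Finset.univ c₀
            (fun _ => if 0 < u i c₀ then ℓ i * (cost c₀ : ℝ) / L else 0)]
          rw [if_pos (Finset.mem_univ c₀)]
        rw [hite]
        have hbound : (if 0 < u i c₀ then ℓ i * (cost c₀ : ℝ) / L else 0) ≤ ℓ i := by
          split
          · rw [mul_div_assoc]
            have h1 : (cost c₀ : ℝ) / L ≤ 1 := (div_le_one hLpos').mpr (le_of_lt hLpos)
            calc ℓ i * ((cost c₀ : ℝ) / L) ≤ ℓ i * 1 :=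
                mul_le_mul_of_nonneg_left h1 (hℓnn i)
              _ = ℓ i := mul_one _
          · exact hℓnn i
        have hℓi : ℓ i = 1 / (Fintype.card V : ℝ) - ∑ c, p i c := by
          rw [hℓ]
          dsimp only
          rw [hrowW i]
        linarith [hbound, hℓi]
      · intro c hc
        rcases Finset.mem_insert.mp hc with rfl | hcW
        · have h1 : (∑ i, p' i c) = ∑ i, (if 0 < u i c then ℓ i * (cost c : ℝ) / L else 0) := by
            refine Finset.sum_congr rfl fun i _ => ?_
            rw [hp'def, hpout c hc₀ i, zero_add, ite_and, if_pos rfl]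
          rw [h1, Finset.sum_ite, Finset.sum_const_zero, add_zero]
          have h2 : (∑ i ∈ Finset.univ.filter (fun i => 0 < u i c), ℓ i * (cost c : ℝ) / L)
              = L * (cost c : ℝ) / L := by
            rw [← Finset.sum_div, ← Finset.sum_mul, hLdef, hF]
          rw [h2]
          exact mul_div_cancel_left₀ _ hLne
        · have hne : c ≠ c₀ := by
            rintro rfl
            exact hc₀ hcW
          have h1 : (∑ i, p' i c) = ∑ i, p i c := by
            refine Finset.sum_congr rfl fun i _ => ?_
            rw [hp'def, if_neg (fun h => hne h.1), add_zero]
          rw [h1]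
          exact hpcol c hcW
      · intro c hc i
        have hne : c ≠ c₀ := fun h => hc (h ▸ Finset.mem_insert_self c₀ W')
        have hcW : c ∉ W' := fun h => hc (Finset.mem_insert_of_mem h)
        rw [hp'def, if_neg (fun h => hne h.1), add_zero]
        exact hpout c hcW i
    have hcard' : (Finset.univ \ insert c₀ W').card ≤ k := by
      have heq : Finset.univ \ insert c₀ W' = (Finset.univ \ W').erase c₀ := by
        ext c
        simp only [Finset.mem_sdiff, Finset.mem_univ, Finset.mem_insert, Finset.mem_erase,
          true_and]
        tauto
      rw [heq]
      have hmem : c₀ ∈ Finset.univ \ W' := Finset.mem_sdiff.mpr ⟨Finset.mem_univ _, hc₀⟩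
      have := Finset.card_erase_lt_of_mem hmem
      omega
    obtain ⟨W'', p'', hsub, hinv'', hC5⟩ := ih (insert c₀ W') p' hcard' hinv'
    exact ⟨W'', p'', (Finset.subset_insert c₀ W').trans hsub, hinv'', hC5⟩

end AuxGCR2

/-- Every outcome of the Greedy Cohesive Rule can be completed to a
priceable feasible outcome. -/
theorem GCR_completable_to_priceable
    {V C : Type*} [Fintype V] [DecidableEq V] [Fintype C] [DecidableEq C]
    (cost : C → ℚ) (u : V → C → ℝ) (hvalid : validPB cost u)
    (W : Finset C) (hW : GCROutcome cost u W) :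
    ∃ W' : Finset C, feasible cost W' ∧ W ⊆ W' ∧ priceable cost u W' := by
  classical
  obtain ⟨hcost, huB, hupos⟩ := hvalid
  by_cases hn : Fintype.card V = 0
  · haveI : IsEmpty V := Fintype.card_eq_zero_iff.mp hn
    haveI : IsEmpty C := ⟨fun c => (hupos c).elim (fun i _ => IsEmpty.false i)⟩
    refine ⟨∅, ?_, ?_, 1, fun _ _ => 0, ?_⟩
    · unfold feasible costOf
      simp
    · intro c hc
      exact (IsEmpty.false c).elim
    · refine ⟨le_refl 1, fun _ _ => le_refl 0, fun _ _ _ => rfl, ?_, ?_, ?_, ?_⟩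
      · intro i
        exact (IsEmpty.false i).elim
      · intro c hc
        exact absurd hc (Finset.notMem_empty c)
      · intro c _
        exact Finset.sum_const_zero
      · intro c _
        exact (IsEmpty.false c).elim
  · have hn' : 0 < Fintype.card V := Nat.pos_of_ne_zero hn
    have hu : ∀ i c, 0 ≤ u i c := fun i c => (huB i c).1
    obtain ⟨AV, AC, hsteps, hterm⟩ := hW
    have base : GInv cost u (∅, Finset.univ, Finset.univ) := by
      refine ⟨by simp, fun _ _ => 0, ⟨fun _ _ => le_refl 0, fun i c h => absurd rfl h,
        ?_, ?_, fun _ _ _ => rfl⟩, fun _ _ _ => rfl⟩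
      · intro i
        rw [Finset.sum_const_zero]
        positivity
      · intro c hc
        exact absurd hc (Finset.notMem_empty c)
    obtain ⟨hAC, p, hpinv, hpAV⟩ := GInv_reaches cost u hn' hcost hu hsteps base
    obtain ⟨W'', p'', hsub, ⟨hp0, hpsupp, hprow, hpcol, hpout⟩, hC5⟩ :=
      complete_priceable cost u hn' hcost hu (Finset.univ \ W).card W p le_rfl hpinv
    refine ⟨W'', ?_, hsub, 1, p'', ?_⟩
    · unfold feasible costOf
      have h1 : (∑ c ∈ W'', (cost c : ℝ)) = ∑ c ∈ W'', ∑ i, p'' i c :=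
        Finset.sum_congr rfl fun c hc => (hpcol c hc).symm
      rw [h1, Finset.sum_comm]
      have h2 : ∀ i, (∑ c ∈ W'', p'' i c) ≤ 1 / (Fintype.card V : ℝ) := fun i =>
        le_trans (Finset.sum_le_sum_of_subset_of_nonneg (Finset.subset_univ _)
          (fun c _ _ => hp0 i c)) (hprow i)
      calc (∑ i, ∑ c ∈ W'', p'' i c) ≤ ∑ _i : V, 1 / (Fintype.card V : ℝ) :=
          Finset.sum_le_sum fun i _ => h2 i
        _ = 1 := by
          rw [Finset.sum_const, Finset.card_univ, nsmul_eq_mul]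
          field_simp
    · refine ⟨le_refl 1, hp0, ?_, ?_, hpcol, ?_, ?_⟩
      · intro i c h0
        by_contra hne
        have := hpsupp i c hne
        rw [h0] at this
        exact lt_irrefl 0 this
      · intro i
        exact hprow i
      · intro c hc
        exact Finset.sum_eq_zero fun i _ => hpout c hc i
      · intro c hc
        exact hC5 c hc
end

section
/- Rule X fails full justified representation: in the approval-based committee election with n = 22 voters, m = 13 candidates c_1,…,c_13 each of cost 1/11 (committee size k = 11), and approval sets A(1)=A(2)=A(3)={c_1,c_2,c_3,c_4,c_8}, A(4)=A(5)=A(6)={c_1,c_2,c_3,c_4,c_9}, A(7)=A(8)=A(9)={c_1,c_2,c_3,c_4,c_10}, A(10)=A(11)=A(12)={c_1,c_2,c_3,c_4,c_11}, A(13)=A(14)=A(15)={c_1,c_2,c_3,c_4,c_12}, A(16)=A(17)=A(18)={c_5,c_6,c_7,c_8,c_9,c_10,c_11,c_12}, A(19)=A(20)=A(21)={c_5,c_6,c_7}, A(22)={c_13}, there is an execution of Rule X that outputs W = {c_1,c_2,c_3,c_4,c_5,c_6,c_7}, and W violates FJR: the group S of voters 1–18 is weakly (5, {c_1,c_2,c_3,c_4,c_8,c_9,c_10,c_11,c_12})-cohesive,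 yet every voter in S has u_i(W) ≤ 4. -/
open Finset

/-- Approval sets of the 22 voters over the 13 candidates (candidate `c_j` is `j-1`). -/
def fjrApprovals : Fin 22 → Finset (Fin 13) := fun i =>
  if (i : ℕ) < 3 then {0, 1, 2, 3, 7}
  else if (i : ℕ) < 6 then {0, 1, 2, 3, 8}
  else if (i : ℕ) < 9 then {0, 1, 2, 3, 9}
  else if (i : ℕ) < 12 then {0, 1, 2, 3, 10}
  else if (i : ℕ) < 15 then {0, 1, 2, 3, 11}
  else if (i : ℕ) < 18 then {4, 5, 6, 7, 8, 9, 10, 11}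
  else if (i : ℕ) < 21 then {4, 5, 6}
  else {12}

/-- The corresponding 0/1 utility functions. -/
noncomputable def fjrUtil : Fin 22 → Fin 13 → ℝ := fun i c => if c ∈ fjrApprovals i then 1 else 0

/-- All 13 candidates cost 1/11 (committee size k = 11). -/
def fjrCost : Fin 13 → ℚ := fun _ => 1/11

/-! ### Auxiliary machinery for the Rule X execution -/

open Finset

/-- Final payments after the Rule X execution buying candidates 0..6. -/
noncomputable def payFinal : Fin 22 → Fin 13 → ℝ := fun i c =>
  (if (c : ℕ) < 4 ∧ (i : ℕ) < 15 then (1/165 : ℝ) else 0) +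
  (if 4 ≤ (c : ℕ) ∧ (c : ℕ) < 7 ∧ 15 ≤ (i : ℕ) ∧ (i : ℕ) < 21 then (1/66 : ℝ) else 0)

/-- Payments after the first `k` purchases (candidates `0,…,k-1`). -/
noncomputable def payUpTo (k : ℕ) : Fin 22 → Fin 13 → ℝ := fun i c =>
  if (c : ℕ) < k then payFinal i c else 0

lemma util01 (i : Fin 22) (c : Fin 13) : fjrUtil i c = 0 ∨ fjrUtil i c = 1 := by
  unfold fjrUtil; split <;> simp

lemma util_nonneg (i : Fin 22) (c : Fin 13) : 0 ≤ fjrUtil i c := by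
  rcases util01 i c with h | h <;> rw [h] <;> norm_num

lemma sumUtil (c : Fin 13) : ∑ i, fjrUtil i c =
    ((Finset.univ.filter (fun i : Fin 22 => c ∈ fjrApprovals i)).card : ℝ) := by
  simp [fjrUtil, Finset.sum_boole]

lemma utilCard (i : Fin 22) (T : Finset (Fin 13)) :
    util fjrUtil i T = ((T.filter (fun c => c ∈ fjrApprovals i)).card : ℝ) := by
  simp [util, fjrUtil, Finset.sum_boole, Finset.filter_mem_eq_inter]

/-- Lower bound on any affordability parameter from the approver count. -/
lemma afford_lb (pay : Fin 22 → Fin 13 → ℝ) (ρ ρ' : ℝ) (c : Fin 13)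
    (h : affordable fjrCost fjrUtil pay ρ' c)
    (hc : ρ * (∑ i, fjrUtil i c) ≤ ((fjrCost c : ℚ) : ℝ)) : ρ ≤ ρ' := by
  have h1 : ((fjrCost c : ℚ) : ℝ) ≤ (∑ i, fjrUtil i c) * ρ' := by
    rw [← h]
    calc ∑ i, min (1 / ((Fintype.card (Fin 22)) : ℝ) - totalPaid pay i) (fjrUtil i c * ρ')
        ≤ ∑ i : Fin 22, fjrUtil i c * ρ' :=
          Finset.sum_le_sum (fun i _ => min_le_right _ _)
      _ = (∑ i, fjrUtil i c) * ρ' := (Finset.sum_mul _ _ _).symm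
  have hs0 : 0 ≤ ∑ i, fjrUtil i c := Finset.sum_nonneg (fun i _ => util_nonneg i c)
  have hcostpos : (0 : ℝ) < ((fjrCost c : ℚ) : ℝ) := by norm_num [fjrCost]
  have hspos : 0 < ∑ i, fjrUtil i c := by
    rcases hs0.eq_or_lt with h0 | h0
    · exfalso; rw [← h0] at h1; simp at h1; norm_num [fjrCost] at h1
    · exact h0
  have := le_trans hc h1
  rw [mul_comm] at this
  exact le_of_mul_le_mul_left this hspos

lemma approverCount : ∀ c : Fin 13,
    (Finset.univ.filter (fun i : Fin 22 => c ∈ fjrApprovals i)).card =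
      if (c : ℕ) < 4 then 15 else if (c : ℕ) < 12 then 6 else 1 := by decide

/-- Closed form for the total amounts paid after `k` purchases. -/
lemma tp (k : ℕ) (hk : k ≤ 7) (i : Fin 22) :
    totalPaid (payUpTo k) i =
      (if (i : ℕ) < 15 then ((min k 4 : ℕ) : ℝ) * (1/165) else 0) +
      (if 15 ≤ (i : ℕ) ∧ (i : ℕ) < 21 then (((min k 7 : ℕ) : ℝ) - ((min k 4 : ℕ) : ℝ)) * (1/66) else 0) := by
  interval_cases k <;>
    simp [totalPaid, payUpTo, payFinal, Fin.sum_univ_succ] <;>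
    split_ifs <;> first | (exfalso; omega) | norm_num | omega

/-- Characterisation of the utility for the purchased candidates. -/
lemma uchar (c : Fin 13) (hc : (c : ℕ) < 7) (i : Fin 22) :
    fjrUtil i c = if ((c : ℕ) < 4 ∧ (i : ℕ) < 15) ∨
      (4 ≤ (c : ℕ) ∧ 15 ≤ (i : ℕ) ∧ (i : ℕ) < 21) then 1 else 0 := by
  have key : ∀ c : Fin 13, (c : ℕ) < 7 → ∀ i : Fin 22,
      (c ∈ fjrApprovals i ↔ (((c : ℕ) < 4 ∧ (i : ℕ) < 15) ∨
        (4 ≤ (c : ℕ) ∧ 15 ≤ (i : ℕ) ∧ (i : ℕ) < 21))) := by decide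
  simp [fjrUtil, key c hc i]

lemma payFinal_eq (c : Fin 13) (hc : (c : ℕ) < 7) (i : Fin 22) :
    payFinal i c = fjrUtil i c * (if (c : ℕ) < 4 then (1/165 : ℝ) else (1/66 : ℝ)) := by
  rw [uchar c hc i, payFinal]
  split_ifs <;> first | (exfalso; omega) | norm_num | omega

/-- The per-voter minimum in the affordability equation equals `uᵢ(c)·ρ` in our run. -/
lemma min_eq_pay (k : ℕ) (hk : k ≤ 6) (c : Fin 13) (hck : (c : ℕ) = k) (i : Fin 22) :
    min ((1 : ℝ)/22 - totalPaid (payUpTo k) i)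
      (fjrUtil i c * (if (c : ℕ) < 4 then (1/165 : ℝ) else (1/66 : ℝ)))
      = fjrUtil i c * (if (c : ℕ) < 4 then (1/165 : ℝ) else (1/66 : ℝ)) := by
  apply min_eq_right
  rw [uchar c (by omega) i, tp k (by omega) i]
  interval_cases k <;> simp only [hck] <;> norm_num <;>
    split_ifs <;> first | (exfalso; omega) | norm_num | omega

/-- One step of this Rule X execution. -/
lemma ruleXstep (k : ℕ) (hk : k ≤ 6) (c : Fin 13) (hck : (c : ℕ) = k)
    (W W' : Finset (Fin 13)) (hW : ∀ d : Fin 13, d ∈ W ↔ (d : ℕ) < k)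
    (hW' : W' = insert c W) :
    RuleXStep fjrCost fjrUtil (W, payUpTo k) (W', payUpTo (k + 1)) := by
  refine ⟨c, by simp [hW, hck], (if (c : ℕ) < 4 then (1/165 : ℝ) else (1/66 : ℝ)),
    by split_ifs <;> norm_num, ?_, ?_, ?_⟩
  · -- affordable
    unfold affordable
    simp only [Fintype.card_fin, Nat.cast_ofNat]
    rw [Finset.sum_congr rfl (fun i _ => min_eq_pay k hk c hck i), ← Finset.sum_mul,
      sumUtil, approverCount, fjrCost]
    simp only [hck]
    split_ifs <;> push_cast <;> first | (exfalso; omega) | norm_num | omega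
  · -- ρ is minimal
    intro ρ' _ c' hc' haff
    apply afford_lb (payUpTo k) _ ρ' c' haff
    rw [sumUtil, approverCount, fjrCost]
    simp only [hck]
    have hc'k : ¬ ((c' : ℕ) < k) := by simpa [hW] using hc'
    split_ifs <;> push_cast <;> first | (exfalso; omega) | norm_num | omega
  · -- the new state
    rw [Prod.ext_iff]
    refine ⟨hW', ?_⟩
    funext i d
    simp only [Fintype.card_fin, Nat.cast_ofNat]
    by_cases hd : d = c
    · subst hd
      rw [if_pos rfl, min_eq_pay k hk d hck i]
      show payUpTo (k+1) i d = _
      rw [payUpTo]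
      simp only [if_pos (show (d : ℕ) < k + 1 by omega)]
      exact payFinal_eq d (by omega) i
    · rw [if_neg hd]
      have hne : (d : ℕ) ≠ k := fun hn => hd (Fin.ext (by omega))
      show payUpTo (k+1) i d = payUpTo k i d
      simp only [payUpTo]
      by_cases h : (d : ℕ) < k
      · rw [if_pos (by omega), if_pos h]
      · rw [if_neg (by omega), if_neg h]

lemma remaining (i : Fin 22) : (1 : ℝ)/22 - totalPaid (payUpTo 7) i =
    if (i : ℕ) < 15 then 7/330 else if (i : ℕ) < 21 then 0 else 1/22 := by
  rw [tp 7 le_rfl i]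
  norm_num
  split_ifs <;> first | (exfalso; omega) | norm_num | omega

lemma terminal :
    RuleXTerminal fjrCost fjrUtil (({0, 1, 2, 3, 4, 5, 6} : Finset (Fin 13)), payUpTo 7) := by
  intro ρ hρ c hc haff
  unfold affordable at haff
  simp only [Fintype.card_fin, Nat.cast_ofNat] at haff
  have hb : ((fjrCost c : ℚ) : ℝ) ≤
      ∑ i : Fin 22, fjrUtil i c * ((1:ℝ)/22 - totalPaid (payUpTo 7) i) := by
    rw [← haff]
    apply Finset.sum_le_sum
    intro i _
    rcases util01 i c with h | h
    · rw [h]; simpa using min_le_right _ _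
    · rw [h]; simpa using min_le_left _ _
  have hsmall : ∀ i : Fin 22, fjrUtil i c * ((1:ℝ)/22 - totalPaid (payUpTo 7) i) ≤
      (if (i : ℕ) < 15 ∧ c ∈ fjrApprovals i then (7/330 : ℝ) else 0) +
      (if (i : ℕ) = 21 ∧ c ∈ fjrApprovals i then (1/22 : ℝ) else 0) := by
    intro i
    rw [remaining i]
    by_cases hm : c ∈ fjrApprovals i
    · simp only [fjrUtil, if_pos hm, hm, and_true, one_mul]
      split_ifs <;> first | (exfalso; omega) | norm_num | omega
    · simp only [fjrUtil, if_neg hm, hm, and_false, if_false, zero_mul]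
      norm_num
  have hb2 := le_trans hb (Finset.sum_le_sum (fun i _ => hsmall i))
  rw [Finset.sum_add_distrib] at hb2
  rw [← Finset.sum_filter, ← Finset.sum_filter, Finset.sum_const, Finset.sum_const,
    nsmul_eq_mul, nsmul_eq_mul] at hb2
  have hcard0 : ∀ c : Fin 13, c ∉ ({0, 1, 2, 3, 4, 5, 6} : Finset (Fin 13)) →
      7 * (Finset.univ.filter
        (fun i : Fin 22 => (i : ℕ) < 15 ∧ c ∈ fjrApprovals i)).card
      + 15 * (Finset.univ.filter
        (fun i : Fin 22 => (i : ℕ) = 21 ∧ c ∈ fjrApprovals i)).card ≤ 21 := by decide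
  have hcard := hcard0 c hc
  rw [fjrCost] at hb2
  set n1 := (Finset.univ.filter (fun i : Fin 22 => (i : ℕ) < 15 ∧ c ∈ fjrApprovals i)).card
  set n2 := (Finset.univ.filter (fun i : Fin 22 => (i : ℕ) = 21 ∧ c ∈ fjrApprovals i)).card
  have hcast : ((7 * n1 + 15 * n2 : ℕ) : ℝ) ≤ 21 := by exact_mod_cast hcard
  push_cast at hcast hb2
  norm_num at hb2
  linarith

lemma start_eq : ((∅ : Finset (Fin 13)), (fun _ _ => 0 : Fin 22 → Fin 13 → ℝ))
    = ((∅ : Finset (Fin 13)), payUpTo 0) := by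
  refine Prod.ext rfl ?_
  funext i c
  simp [payUpTo]

lemma ruleX_outcome :
    RuleXOutcome fjrCost fjrUtil ({0, 1, 2, 3, 4, 5, 6} : Finset (Fin 13)) := by
  refine ⟨payUpTo 7, ?_, terminal⟩
  rw [start_eq]
  have s0 := ruleXstep 0 (by norm_num) 0 rfl ∅ {0} (by decide) (by decide)
  have s1 := ruleXstep 1 (by norm_num) 1 rfl {0} {0, 1} (by decide) (by decide)
  have s2 := ruleXstep 2 (by norm_num) 2 rfl {0, 1} {0, 1, 2} (by decide) (by decide)
  have s3 := ruleXstep 3 (by norm_num) 3 rfl {0, 1, 2} {0, 1, 2, 3} (by decide) (by decide)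
  have s4 := ruleXstep 4 (by norm_num) 4 rfl {0, 1, 2, 3} {0, 1, 2, 3, 4} (by decide) (by decide)
  have s5 := ruleXstep 5 (by norm_num) 5 rfl {0, 1, 2, 3, 4} {0, 1, 2, 3, 4, 5}
    (by decide) (by decide)
  have s6 := ruleXstep 6 (by norm_num) 6 rfl {0, 1, 2, 3, 4, 5} {0, 1, 2, 3, 4, 5, 6}
    (by decide) (by decide)
  exact .head s0 (.head s1 (.head s2 (.head s3 (.head s4 (.head s5 (.single s6))))))

lemma cohesive18 : weaklyCohesive fjrCost fjrUtil 5
    (Finset.univ.filter (fun i : Fin 22 => (i : ℕ) < 18))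
    ({0, 1, 2, 3, 7, 8, 9, 10, 11} : Finset (Fin 13)) := by
  refine ⟨⟨0, by decide⟩, ?_, ?_⟩
  · have hT : costOf fjrCost ({0, 1, 2, 3, 7, 8, 9, 10, 11} : Finset (Fin 13)) = 9/11 := by
      rw [costOf]
      simp only [fjrCost]
      rw [Finset.sum_const, show ({0, 1, 2, 3, 7, 8, 9, 10, 11} : Finset (Fin 13)).card = 9
        from by decide, nsmul_eq_mul]
      push_cast
      norm_num
    rw [hT, show ((Finset.univ.filter (fun i : Fin 22 => (i : ℕ) < 18)).card : ℝ) = 18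
      from by norm_num [show (Finset.univ.filter (fun i : Fin 22 => (i : ℕ) < 18)).card = 18
        from by decide]]
    simp only [Fintype.card_fin]
    norm_num
  · intro i hi
    rw [utilCard]
    have h : ∀ i ∈ Finset.univ.filter (fun i : Fin 22 => (i : ℕ) < 18),
        5 ≤ (({0, 1, 2, 3, 7, 8, 9, 10, 11} : Finset (Fin 13)).filter
          (fun c => c ∈ fjrApprovals i)).card := by decide
    exact_mod_cast h i hi

lemma util_le4 : ∀ i ∈ Finset.univ.filter (fun i : Fin 22 => (i : ℕ) < 18),
    util fjrUtil i ({0, 1, 2, 3, 4, 5, 6} : Finset (Fin 13)) ≤ 4 := by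
  intro i hi
  rw [utilCard]
  have h : ∀ i ∈ Finset.univ.filter (fun i : Fin 22 => (i : ℕ) < 18),
      (({0, 1, 2, 3, 4, 5, 6} : Finset (Fin 13)).filter
        (fun c => c ∈ fjrApprovals i)).card ≤ 4 := by decide
  exact_mod_cast h i hi

/-- Rule X fails full justified representation: some execution of
Rule X outputs W = {c₁,…,c₇}, although the group of voters 1–18 is weakly
(5, {c₁,c₂,c₃,c₄,c₈,c₉,c₁₀,c₁₁,c₁₂})-cohesive and every voter in it has at most
4 approved candidates in W. -/
theorem ruleX_fails_FJR :
    RuleXOutcome fjrCost fjrUtil ({0, 1, 2, 3, 4, 5, 6} : Finset (Fin 13)) ∧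
    weaklyCohesive fjrCost fjrUtil 5
      (Finset.univ.filter (fun i : Fin 22 => (i : ℕ) < 18))
      ({0, 1, 2, 3, 7, 8, 9, 10, 11} : Finset (Fin 13)) ∧
    (∀ i ∈ Finset.univ.filter (fun i : Fin 22 => (i : ℕ) < 18),
      util fjrUtil i ({0, 1, 2, 3, 4, 5, 6} : Finset (Fin 13)) ≤ 4) ∧
    ¬ FJR fjrCost fjrUtil ({0, 1, 2, 3, 4, 5, 6} : Finset (Fin 13)) := by
  refine ⟨ruleX_outcome, cohesive18, util_le4, ?_⟩
  intro hFJR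
  obtain ⟨i, hi, h5⟩ := hFJR 5 _ _ cohesive18
  have h4 := util_le4 i hi
  linarith
end

section
/- PAV fails full justified representation: in the approval-based committee election with n = 6 voters, m = 15 candidates c_1,…,c_15 each of cost 1/12 (committee size k = 12), and approval sets A(1)={c_1,c_2,c_3,c_4}, A(2)={c_1,c_2,c_3,c_5}, A(3)={c_1,c_2,c_3,c_6}, A(4)={c_7,c_8,c_9}, A(5)={c_10,c_11,c_12}, A(6)={c_13,c_14,c_15}, every feasible outcome W maximizing the PAV score gives each of voters 1, 2, 3 at most 3 approved members, although voters {1,2,3} form a weakly (4, {c_1,c_2,c_3,c_4,c_5,c_6})-cohesive group; hence every PAV-optimal outcome violates FJR. -/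
open Finset

/-- Approval sets of the 6 voters over the 15 candidates (candidate `c_j` is `j-1`). -/
def pavApprovals : Fin 6 → Finset (Fin 15) := fun i =>
  if (i : ℕ) = 0 then {0, 1, 2, 3}
  else if (i : ℕ) = 1 then {0, 1, 2, 4}
  else if (i : ℕ) = 2 then {0, 1, 2, 5}
  else if (i : ℕ) = 3 then {6, 7, 8}
  else if (i : ℕ) = 4 then {9, 10, 11}
  else {12, 13, 14}

/-- The corresponding 0/1 utility functions. -/
noncomputable def pavUtil : Fin 6 → Fin 15 → ℝ := fun i c => if c ∈ pavApprovals i then 1 else 0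

/-- All 15 candidates cost 1/12 (committee size k = 12). -/
def pavCost : Fin 15 → ℚ := fun _ => 1/12

lemma harm_succ (t : ℕ) : harm (t+1) = harm t + 1/((t:ℝ)+1) := by
  simp [harm, Finset.sum_range_succ]

lemma harm3 : harm 3 = 11/6 := by norm_num [harm, Finset.sum_range_succ]
lemma harm4 : harm 4 = 25/12 := by norm_num [harm, Finset.sum_range_succ]

lemma util_eq_card (i : Fin 6) (T : Finset (Fin 15)) :
    util pavUtil i T = ((pavApprovals i ∩ T).card : ℝ) := by
  unfold util pavUtil
  rw [Finset.sum_boole]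
  congr 1
  rw [Finset.filter_mem_eq_inter, Finset.inter_comm]

lemma feasible_iff (W : Finset (Fin 15)) : feasible pavCost W ↔ W.card ≤ 12 := by
  unfold feasible costOf pavCost
  rw [Finset.sum_const]
  push_cast
  rw [nsmul_eq_mul]
  constructor
  · intro h
    by_contra hc
    push_neg at hc
    have : (13 : ℝ) ≤ (W.card : ℝ) := by exact_mod_cast hc
    nlinarith
  · intro h
    have : (W.card : ℝ) ≤ 12 := by exact_mod_cast h
    nlinarith

lemma pav_swap (W : Finset (Fin 15)) (e c : Fin 15) (ve vc : Fin 6)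
    (hne : vc ≠ ve)
    (he : ∀ i : Fin 6, e ∈ pavApprovals i ↔ i = ve)
    (hc : ∀ i : Fin 6, c ∈ pavApprovals i ↔ i = vc)
    (heW : e ∈ W) (hcW : c ∉ W)
    (h4 : (pavApprovals ve ∩ W).card = 4)
    (h2 : (pavApprovals vc ∩ W).card ≤ 2) :
    PAVscore pavApprovals W < PAVscore pavApprovals (insert c (W.erase e)) := by
  set W' := insert c (W.erase e) with hW'
  set t := (pavApprovals vc ∩ W).card with ht
  have hkey : ∀ i : Fin 6, i ≠ ve → i ≠ vc → pavApprovals i ∩ W' = pavApprovals i ∩ W := by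
    intro i hi1 hi2
    have heA : e ∉ pavApprovals i := fun h => hi1 ((he i).1 h)
    have hcA : c ∉ pavApprovals i := fun h => hi2 ((hc i).1 h)
    rw [hW', Finset.inter_insert_of_notMem hcA, Finset.inter_erase,
      Finset.erase_eq_of_notMem (fun h => heA (Finset.mem_inter.1 h).1)]
  have hcve : c ∉ pavApprovals ve := fun h => hne (((hc ve).1 h).symm ▸ rfl)
  have hevc : e ∉ pavApprovals vc := fun h => hne (((he vc).1 h) ▸ rfl)
  have hveq : pavApprovals ve ∩ W' = (pavApprovals ve ∩ W).erase e := by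
    rw [hW', Finset.inter_insert_of_notMem hcve, Finset.inter_erase]
  have hvceq : pavApprovals vc ∩ W' = insert c (pavApprovals vc ∩ W) := by
    rw [hW', Finset.inter_insert_of_mem ((hc vc).2 rfl), Finset.inter_erase,
      Finset.erase_eq_of_notMem (fun h => hevc (Finset.mem_inter.1 h).1)]
  have hcve_card : (pavApprovals ve ∩ W').card = 3 := by
    rw [hveq, Finset.card_erase_of_mem (Finset.mem_inter.2 ⟨(he ve).2 rfl, heW⟩), h4]
  have hcvc_card : (pavApprovals vc ∩ W').card = t + 1 := by
    rw [hvceq, Finset.card_insert_of_notMem (fun h => hcW (Finset.mem_inter.1 h).2)]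
  have hdiff : PAVscore pavApprovals W' - PAVscore pavApprovals W =
      (harm 3 - harm 4) + (harm (t+1) - harm t) := by
    unfold PAVscore
    rw [← Finset.sum_sub_distrib]
    rw [← Finset.sum_subset (Finset.subset_univ ({ve, vc} : Finset (Fin 6)))
      (by
        intro i _ hi
        simp only [Finset.mem_insert, Finset.mem_singleton] at hi
        push_neg at hi
        rw [hkey i hi.1 hi.2, sub_self])]
    rw [Finset.sum_pair (fun h => hne (h.symm))]
    rw [hcve_card, hcvc_card, h4, ht]
  have hineq : harm (t+1) - harm t ≥ 1/3 := by
    rw [harm_succ]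
    have : (1:ℝ)/3 ≤ 1/((t:ℝ)+1) := by
      interval_cases t <;> norm_num
    linarith
  have : (0:ℝ) < PAVscore pavApprovals W' - PAVscore pavApprovals W := by
    rw [hdiff, harm3, harm4]
    linarith
  linarith

lemma pav_aux2 (W : Finset (Fin 15)) (ve vc : Fin 6) (e : Fin 15)
    (hve : ve ∈ ({0,1,2} : Finset (Fin 6))) (hvc : vc ∈ ({3,4,5} : Finset (Fin 6)))
    (he : ∀ i : Fin 6, e ∈ pavApprovals i ↔ i = ve)
    (heW : e ∈ W)
    (h4 : (pavApprovals ve ∩ W).card = 4)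
    (h2 : (pavApprovals vc ∩ W).card ≤ 2)
    (hWcard : W.card ≤ 12) :
    ∃ W' : Finset (Fin 15), W'.card ≤ 12 ∧
      PAVscore pavApprovals W < PAVscore pavApprovals W' := by
  have hAvc : (pavApprovals vc).card = 3 := by fin_cases hvc <;> decide
  have hnsub : ¬ pavApprovals vc ⊆ W := by
    intro h
    rw [Finset.inter_eq_left.2 h, hAvc] at h2
    omega
  obtain ⟨c, hcA, hcW⟩ := Finset.not_subset.1 hnsub
  have hc : ∀ i : Fin 6, c ∈ pavApprovals i ↔ i = vc := by
    fin_cases hvc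
    · exact (by decide : ∀ c' ∈ pavApprovals 3, ∀ i : Fin 6,
        c' ∈ pavApprovals i ↔ i = 3) c hcA
    · exact (by decide : ∀ c' ∈ pavApprovals 4, ∀ i : Fin 6,
        c' ∈ pavApprovals i ↔ i = 4) c hcA
    · exact (by decide : ∀ c' ∈ pavApprovals 5, ∀ i : Fin 6,
        c' ∈ pavApprovals i ↔ i = 5) c hcA
  have hne : vc ≠ ve := by fin_cases hve <;> fin_cases hvc <;> decide
  refine ⟨insert c (W.erase e), ?_, pav_swap W e c ve vc hne he hc heW hcW h4 h2⟩
  have hi := Finset.card_insert_le c (W.erase e)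
  have herase := Finset.card_erase_of_mem heW
  have hpos : 0 < W.card := Finset.card_pos.2 ⟨e, heW⟩
  omega

lemma pav_aux (W : Finset (Fin 15)) (hWcard : W.card ≤ 12) (ve : Fin 6)
    (hve : ve ∈ ({0,1,2} : Finset (Fin 6)))
    (hsub : pavApprovals ve ⊆ W) :
    ∃ W' : Finset (Fin 15), W'.card ≤ 12 ∧
      PAVscore pavApprovals W < PAVscore pavApprovals W' := by
  obtain ⟨e, he⟩ : ∃ e : Fin 15, ∀ i : Fin 6, e ∈ pavApprovals i ↔ i = ve := by
    fin_cases hve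
    exacts [⟨3, by decide⟩, ⟨4, by decide⟩, ⟨5, by decide⟩]
  have heW : e ∈ W := hsub ((he ve).2 rfl)
  have h4 : (pavApprovals ve ∩ W).card = 4 := by
    rw [Finset.inter_eq_left.2 hsub]
    fin_cases hve <;> decide
  -- counting
  have hd3 : Disjoint (pavApprovals ve) (pavApprovals 3) := by fin_cases hve <;> decide
  have hd4 : Disjoint (pavApprovals ve) (pavApprovals 4) := by fin_cases hve <;> decide
  have hd5 : Disjoint (pavApprovals ve) (pavApprovals 5) := by fin_cases hve <;> decide
  have hd34 : Disjoint (pavApprovals 3 : Finset (Fin 15)) (pavApprovals 4) := by decide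
  have hd35 : Disjoint (pavApprovals 3 : Finset (Fin 15)) (pavApprovals 5) := by decide
  have hd45 : Disjoint (pavApprovals 4 : Finset (Fin 15)) (pavApprovals 5) := by decide
  set B := pavApprovals ve ∪ ((pavApprovals 3 ∩ W) ∪ ((pavApprovals 4 ∩ W) ∪ (pavApprovals 5 ∩ W))) with hB
  have hBsub : B ⊆ W := by
    rw [hB]
    refine Finset.union_subset hsub (Finset.union_subset Finset.inter_subset_right
      (Finset.union_subset Finset.inter_subset_right Finset.inter_subset_right))
  have hBcard : B.card = (pavApprovals ve).card + ((pavApprovals 3 ∩ W).card +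
      ((pavApprovals 4 ∩ W).card + (pavApprovals 5 ∩ W).card)) := by
    rw [hB, Finset.card_union_of_disjoint, Finset.card_union_of_disjoint,
      Finset.card_union_of_disjoint]
    · exact hd45.mono Finset.inter_subset_left Finset.inter_subset_left
    · exact Finset.disjoint_union_right.2
        ⟨hd34.mono Finset.inter_subset_left Finset.inter_subset_left,
         hd35.mono Finset.inter_subset_left Finset.inter_subset_left⟩
    · exact Finset.disjoint_union_right.2
        ⟨hd3.mono_right Finset.inter_subset_left, Finset.disjoint_union_right.2
          ⟨hd4.mono_right Finset.inter_subset_left, hd5.mono_right Finset.inter_subset_left⟩⟩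
  have hve4 : (pavApprovals ve).card = 4 := by fin_cases hve <;> decide
  have hsum : (pavApprovals 3 ∩ W).card + (pavApprovals 4 ∩ W).card
      + (pavApprovals 5 ∩ W).card ≤ 8 := by
    have := Finset.card_le_card hBsub
    omega
  have : (pavApprovals 3 ∩ W).card ≤ 2 ∨ (pavApprovals 4 ∩ W).card ≤ 2 ∨
      (pavApprovals 5 ∩ W).card ≤ 2 := by omega
  rcases this with h | h | h
  · exact pav_aux2 W ve 3 e hve (by decide) he heW h4 h hWcard
  · exact pav_aux2 W ve 4 e hve (by decide) he heW h4 h hWcard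
  · exact pav_aux2 W ve 5 e hve (by decide) he heW h4 h hWcard

/-- PAV fails full justified representation: every feasible outcome
maximizing the PAV score gives each of the first three voters at most 3 approved
candidates, although those voters form a weakly (4, {c₁,…,c₆})-cohesive group;
hence every PAV-optimal outcome violates FJR. -/
theorem PAV_fails_FJR :
    ∀ W : Finset (Fin 15), feasible pavCost W →
      (∀ W' : Finset (Fin 15), feasible pavCost W' → PAVscore pavApprovals W' ≤ PAVscore pavApprovals W) →
      (∀ i ∈ ({0, 1, 2} : Finset (Fin 6)), ((pavApprovals i ∩ W).card : ℕ) ≤ 3) ∧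
      weaklyCohesive pavCost pavUtil 4 ({0, 1, 2} : Finset (Fin 6))
        ({0, 1, 2, 3, 4, 5} : Finset (Fin 15)) ∧
      ¬ FJR pavCost pavUtil W := by
  intro W hfeas hopt
  have hWcard : W.card ≤ 12 := (feasible_iff W).1 hfeas
  have h1 : ∀ i ∈ ({0, 1, 2} : Finset (Fin 6)), ((pavApprovals i ∩ W).card : ℕ) ≤ 3 := by
    by_contra hcon
    push_neg at hcon
    obtain ⟨i, hiS, hi4⟩ := hcon
    have hAi : (pavApprovals i).card = 4 := by fin_cases hiS <;> decide
    have hsub : pavApprovals i ⊆ W := by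
      have hle : (pavApprovals i ∩ W).card ≤ (pavApprovals i).card :=
        Finset.card_le_card Finset.inter_subset_left
      have heq : pavApprovals i ∩ W = pavApprovals i :=
        Finset.eq_of_subset_of_card_le Finset.inter_subset_left (by omega)
      exact Finset.inter_eq_left.1 heq
    obtain ⟨W', hW'card, hW'gt⟩ := pav_aux W hWcard i hiS hsub
    exact absurd (hopt W' ((feasible_iff W').2 hW'card)) (not_le.2 hW'gt)
  refine ⟨h1, ?_, ?_⟩
  · refine ⟨⟨0, by decide⟩, ?_, ?_⟩
    · unfold costOf pavCost
      norm_num [show ({0,1,2,3,4,5} : Finset (Fin 15)).card = 6 from by decide,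
        show ({0,1,2} : Finset (Fin 6)).card = 3 from by decide]
    · intro i hi
      rw [util_eq_card]
      have : (pavApprovals i ∩ ({0,1,2,3,4,5} : Finset (Fin 15))).card = 4 := by
        fin_cases hi <;> decide
      rw [this]; norm_num
  · intro hFJR
    obtain ⟨i, hiS, hi4⟩ := hFJR 4 ({0,1,2} : Finset (Fin 6))
      ({0,1,2,3,4,5} : Finset (Fin 15))
      ⟨⟨0, by decide⟩, by
        unfold costOf pavCost
        norm_num [show ({0,1,2,3,4,5} : Finset (Fin 15)).card = 6 from by decide,
          show ({0,1,2} : Finset (Fin 6)).card = 3 from by decide], by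
        intro i hi
        rw [util_eq_card]
        have : (pavApprovals i ∩ ({0,1,2,3,4,5} : Finset (Fin 15))).card = 4 := by
          fin_cases hi <;> decide
        rw [this]; norm_num⟩
    rw [util_eq_card] at hi4
    have := h1 i hiS
    have : ((pavApprovals i ∩ W).card : ℝ) ≤ 3 := by exact_mod_cast this
    linarith
end
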